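/- arXiv:2604.14673 — 8 statements merged into one kernel-verified Lean document; each statement's English description precedes it below -/
import Mathlib

section
/- If Γ is an unbalanced signed bipartite graph containing no negative 4-cycle, then Γ contains a negative induced cycle of length at least 6; in particular, both partite sets of the underlying bipartite graph have size at least 3. -/
open Matrix Finset

structure SignedGraph (V : Type*) where
  G : SimpleGraph V
  sign : V → V → ℝ
  sign_symm : ∀ u v, sign u v = sign v u
  sign_edge : ∀ u v, G.Adj u v → sign u v = 1 ∨ sign u v = -1
  sign_nonedge : ∀ u v, ¬ G.Adj u v → sign u v = 0

def SignedGraph.adjMatrix {V : Type*} (Γ : SignedGraph V) : Matrix V V ℝ :=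
  Matrix.of fun u v => Γ.sign u v

def SignedGraph.edgeSign {V : Type*} (Γ : SignedGraph V) : Sym2 V → ℝ :=
  Sym2.lift ⟨Γ.sign, Γ.sign_symm⟩

def SignedGraph.IsNegCycle {V : Type*} (Γ : SignedGraph V) {u : V}
    (w : Γ.G.Walk u u) : Prop :=
  w.IsCycle ∧ (w.edges.map Γ.edgeSign).prod = -1

def SignedGraph.Unbalanced {V : Type*} (Γ : SignedGraph V) : Prop :=
  ∃ (u : V) (w : Γ.G.Walk u u), Γ.IsNegCycle w

namespace SignedGraph
open SimpleGraph

variable {V : Type*} (Γ : SignedGraph V)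

lemma edgeSign_mk (u v : V) : Γ.edgeSign s(u,v) = Γ.sign u v := rfl

lemma prod_pm {u v : V} (w : Γ.G.Walk u v) :
    (w.edges.map Γ.edgeSign).prod = 1 ∨ (w.edges.map Γ.edgeSign).prod = -1 := by
  induction w with
  | nil => simp
  | cons h p ih =>
    simp only [Walk.edges_cons, List.map_cons, List.prod_cons]
    rcases Γ.sign_edge _ _ h with h1 | h1 <;> rcases ih with h2 | h2 <;>
      simp [edgeSign_mk, h1, h2]

lemma length_rotate' [DecidableEq V] {G : SimpleGraph V} {u v : V} (c : G.Walk v v) (h : u ∈ c.support) :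
    (c.rotate u h).length = c.length := by
  have h2 := congrArg Walk.length (c.take_spec h)
  rw [Walk.length_append] at h2
  unfold Walk.rotate
  rw [Walk.length_append]
  omega

lemma mem_support_tail_of_closed {G : SimpleGraph V} {u z : V} {w : G.Walk u u}
    (hnil : ¬ w.Nil) (hz : z ∈ w.support) : z ∈ w.support.tail := by
  rcases List.mem_cons.mp ((w.support_eq_cons ▸ hz)) with rfl | h
  · have := Walk.end_mem_support w.tail
    rwa [Walk.support_tail_of_not_nil w hnil] at this
  · exact h

lemma getVert_support_getElem {G : SimpleGraph V} {u v : V} (w : G.Walk u v) (i : ℕ)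
    (hi : i ≤ w.length) : w.support[i]? = some (w.getVert i) := by
  induction w generalizing i with
  | nil =>
    simp only [Walk.length_nil, Nat.le_zero] at hi
    subst hi
    simp [Walk.getVert]
  | cons h p ih =>
    cases i with
    | zero => simp [Walk.getVert]
    | succ i =>
      rw [Walk.support_cons, Walk.getVert_cons_succ]
      simpa using ih i (by simpa using hi)

lemma cycle_getVert_inj {G : SimpleGraph V} {u : V} {w : G.Walk u u} (hw : w.IsCycle)
    {i j : ℕ} (hi1 : 1 ≤ i) (hi : i ≤ w.length) (hj1 : 1 ≤ j) (hj : j ≤ w.length)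
    (h : w.getVert i = w.getVert j) : i = j := by
  have hnd := hw.support_nodup
  have h1 : w.support.tail[i-1]? = w.support[i]? := by
    rw [List.getElem?_tail]
    congr 1
    omega
  have h2 : w.support.tail[j-1]? = w.support[j]? := by
    rw [List.getElem?_tail]
    congr 1
    omega
  have hlt : i - 1 < w.support.tail.length := by
    simp [List.length_tail, w.length_support]
    omega
  have key : w.support.tail[i-1]? = w.support.tail[j-1]? := by
    rw [h1, h2, getVert_support_getElem _ _ hi, getVert_support_getElem _ _ hj, h]
  have := (List.getElem?_inj hlt hnd).mp key
  omega

lemma color_parity {G : SimpleGraph V} {c : V → Bool} (hc : ∀ u v, G.Adj u v → c u ≠ c v)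
    {u v : V} (w : G.Walk u v) : (c u = c v) ↔ Even w.length := by
  induction w with
  | nil => simp
  | @cons a b d h p ih =>
    have hne := hc _ _ h
    rw [Walk.length_cons, Nat.even_add_one, ← ih]
    revert hne
    cases (c a) <;> cases (c b) <;> cases (c d) <;> simp

lemma chord_split [DecidableEq V] {x : V} (w : Γ.G.Walk x x) (hw : Γ.IsNegCycle w) {y : V}
    (hysup : y ∈ w.support) (hadj : Γ.G.Adj x y) (hch : s(x,y) ∉ w.edges) :
    ∃ (w' : Γ.G.Walk x x), Γ.IsNegCycle w' ∧ w'.length < w.length := by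
  obtain ⟨hcyc, hneg⟩ := hw
  cases w with
  | nil => simpa using hcyc.three_le_length
  | @cons _ v _ h p =>
    rw [Walk.cons_isCycle_iff] at hcyc
    obtain ⟨hp, he⟩ := hcyc
    have hxy : x ≠ y := hadj.ne
    have hyp : y ∈ p.support := by
      rcases List.mem_cons.mp ((Walk.support_cons h p) ▸ hysup) with h1 | h1
      · exact absurd h1.symm hxy
      · exact h1
    have hvy : v ≠ y := by
      rintro rfl
      exact hch (by simp)
    have hsplit : p = (p.takeUntil y hyp).append (p.dropUntil y hyp) := (p.take_spec hyp).symm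
    set p1 := p.takeUntil y hyp with hp1def
    set p2 := p.dropUntil y hyp with hp2def
    have hp1 : p1.IsPath := hp.takeUntil hyp
    have hp2 : p2.IsPath := hp.dropUntil hyp
    have hxp1 : x ∉ p1.support := by
      intro hx1
      have hnd : p.support.Nodup := hp.support_nodup
      rw [hsplit, Walk.support_append] at hnd
      have hx2 : x ∈ p2.support.tail := by
        have hxe : x ∈ p2.support := Walk.end_mem_support p2
        rcases List.mem_cons.mp ((p2.support_eq_cons ▸ hxe)) with h1 | h1
        · exact absurd h1 hxy
        · exact h1
      exact (List.disjoint_of_nodup_append hnd) hx1 hx2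
    have hp1e : ∀ e ∈ p1.edges, e ∈ p.edges := fun e hee => p.edges_takeUntil_subset hyp hee
    have hp2e : ∀ e ∈ p2.edges, e ∈ p.edges := fun e hee => p.edges_dropUntil_subset hyp hee
    have hchp : s(x,y) ∉ p.edges := fun hh => hch (by
      rw [Walk.edges_cons]; exact List.mem_cons_of_mem _ hh)
    have hxvp1 : s(x,v) ∉ p1.edges := fun hh => he (hp1e _ hh)
    have hB : (Walk.cons hadj p2).IsCycle :=
      (Walk.cons_isCycle_iff p2 hadj).mpr ⟨hp2, fun hh => hchp (hp2e _ hh)⟩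
    have hApath : (p1.concat hadj.symm).IsPath := by
      apply Walk.IsPath.mk'
      rw [Walk.support_concat]
      exact List.Nodup.append hp1.support_nodup (List.nodup_singleton x)
        (by simpa using hxp1)
    have hA : (Walk.cons h (p1.concat hadj.symm)).IsCycle := by
      refine (Walk.cons_isCycle_iff _ h).mpr ⟨hApath, ?_⟩
      rw [Walk.edges_concat]
      simp only [List.concat_eq_append, List.mem_append, List.mem_singleton]
      rintro (hh | hh)
      · exact hxvp1 hh
      · rw [Sym2.eq_iff] at hh
        rcases hh with ⟨h1, _⟩ | ⟨_, h2⟩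
        · exact hxy h1
        · exact hvy h2
    have hlenp : p.length = p1.length + p2.length := by
      conv_lhs => rw [hsplit]
      rw [Walk.length_append]
    have h3A := hA.three_le_length
    have h3B := hB.three_le_length
    have hlA : (Walk.cons h (p1.concat hadj.symm)).length = p1.length + 2 := by
      simp [Walk.length_concat]
    have hlB : (Walk.cons hadj p2).length = p2.length + 1 := by simp
    have hprodp : (p.edges.map Γ.edgeSign).prod
        = (p1.edges.map Γ.edgeSign).prod * (p2.edges.map Γ.edgeSign).prod := by
      conv_lhs => rw [hsplit]
      rw [Walk.edges_append, List.map_append, List.prod_append]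
    have hneg' : Γ.edgeSign s(x,v) *
        ((p1.edges.map Γ.edgeSign).prod * (p2.edges.map Γ.edgeSign).prod) = -1 := by
      rw [← hprodp]
      simpa [Walk.edges_cons] using hneg
    have hsgn : Γ.edgeSign s(x,y) = 1 ∨ Γ.edgeSign s(x,y) = -1 := Γ.sign_edge x y hadj
    have hsyx : Γ.edgeSign s(y,x) = Γ.edgeSign s(x,y) := by rw [Sym2.eq_swap]
    have hprodA : ((Walk.cons h (p1.concat hadj.symm)).edges.map Γ.edgeSign).prod
        = Γ.edgeSign s(x,v) * (p1.edges.map Γ.edgeSign).prod * Γ.edgeSign s(x,y) := by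
      rw [Walk.edges_cons, Walk.edges_concat, List.map_cons, List.prod_cons,
        List.concat_eq_append, List.map_append, List.prod_append]
      simp [hsyx, mul_assoc]
    have hprodB : ((Walk.cons hadj p2).edges.map Γ.edgeSign).prod
        = Γ.edgeSign s(x,y) * (p2.edges.map Γ.edgeSign).prod := by
      rw [Walk.edges_cons, List.map_cons, List.prod_cons]
    have hmul : ((Walk.cons h (p1.concat hadj.symm)).edges.map Γ.edgeSign).prod *
        ((Walk.cons hadj p2).edges.map Γ.edgeSign).prod = -1 := by
      rw [hprodA, hprodB]
      rcases hsgn with hs | hs <;> rw [hs] <;> linear_combination hneg'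
    rcases Γ.prod_pm (Walk.cons h (p1.concat hadj.symm)) with hpa | hpa
    · refine ⟨Walk.cons hadj p2, ⟨hB, ?_⟩, ?_⟩
      · rw [hpa, one_mul] at hmul
        exact hmul
      · rw [hlB, Walk.length_cons]
        omega
    · refine ⟨Walk.cons h (p1.concat hadj.symm), ⟨hA, hpa⟩, ?_⟩
      rw [hlA, Walk.length_cons]
      omega

end SignedGraph

lemma SignedGraph.three_le_card_filter {V : Type*} [Fintype V] [DecidableEq V] (P : V → Prop)
    [DecidablePred P] {a b d : V} (hab : a ≠ b) (had : a ≠ d) (hbd : b ≠ d)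
    (ha : P a) (hb : P b) (hd : P d) : 3 ≤ (Finset.univ.filter P).card := by
  have hsub : ({a, b, d} : Finset V) ⊆ Finset.univ.filter P := by
    intro x hx
    simp only [Finset.mem_insert, Finset.mem_singleton] at hx
    rcases hx with rfl | rfl | rfl <;> simp [Finset.mem_filter, ha, hb, hd]
  have hcard : ({a, b, d} : Finset V).card = 3 := by
    rw [Finset.card_insert_of_notMem (by simp [hab, had]),
      Finset.card_insert_of_notMem (by simp [hbd])]
    rfl
  exact hcard ▸ Finset.card_le_card hsub

/-- An unbalanced signed bipartite graph with no negative 4-cycle contains a negative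
induced cycle of length at least 6; in particular both partite sets have size at least 3. -/
theorem exists_negCycle_ge_six {V : Type*} [Fintype V] [DecidableEq V]
    (Γ : SignedGraph V) (c : V → Bool) (hc : ∀ u v, Γ.G.Adj u v → c u ≠ c v)
    (hU : Γ.Unbalanced)
    (hC4 : ∀ (u : V) (w : Γ.G.Walk u u), Γ.IsNegCycle w → w.length ≠ 4) :
    (∃ (u : V) (w : Γ.G.Walk u u), Γ.IsNegCycle w ∧ 6 ≤ w.length ∧
      ∀ x y, x ∈ w.support → y ∈ w.support → Γ.G.Adj x y → s(x, y) ∈ w.edges) ∧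
    3 ≤ (Finset.univ.filter fun v => c v = true).card ∧
    3 ≤ (Finset.univ.filter fun v => c v = false).card := by
  classical
  have hex : ∃ n : ℕ, ∃ (u : V) (w : Γ.G.Walk u u), Γ.IsNegCycle w ∧ w.length = n := by
    obtain ⟨u, w, h⟩ := hU
    exact ⟨w.length, u, w, h, rfl⟩
  obtain ⟨u, w, hw, hlen⟩ := Nat.find_spec hex
  have hmin : ∀ (z : V) (w' : Γ.G.Walk z z), Γ.IsNegCycle w' → Nat.find hex ≤ w'.length := by
    intro z w' h'
    by_contra hlt
    push_neg at hlt
    exact Nat.find_min hex hlt ⟨z, w', h', rfl⟩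
  have h3 := hw.1.three_le_length
  have hnil : ¬ w.Nil := by
    rw [SimpleGraph.Walk.not_nil_iff_lt_length]
    omega
  have hind : ∀ x y, x ∈ w.support → y ∈ w.support → Γ.G.Adj x y → s(x, y) ∈ w.edges := by
    intro x y hx hy hxy
    by_contra hch
    have hcycr := hw.1.rotate hx
    have hperm : (w.rotate x hx).edges.Perm w.edges := (w.rotate_edges x hx).perm
    have hprodr : ((w.rotate x hx).edges.map Γ.edgeSign).prod = -1 :=
      ((hperm.map Γ.edgeSign).prod_eq).trans hw.2
    have hyt : y ∈ w.support.tail := SignedGraph.mem_support_tail_of_closed hnil hy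
    have hyr : y ∈ (w.rotate x hx).support :=
      List.mem_of_mem_tail (((w.support_rotate x hx).perm.mem_iff).mpr hyt)
    have hchr : s(x, y) ∉ (w.rotate x hx).edges := fun hh => hch (hperm.mem_iff.mp hh)
    obtain ⟨w', hneg', hlt⟩ := Γ.chord_split (w.rotate x hx) ⟨hcycr, hprodr⟩ hyr hxy hchr
    have := hmin x w' hneg'
    rw [SignedGraph.length_rotate'] at hlt
    omega
  have heven : Even w.length := (SignedGraph.color_parity hc w).mp rfl
  have h4 := hC4 u w hw
  have h6 : 6 ≤ w.length := by
    obtain ⟨k, hk⟩ := heven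
    omega
  refine ⟨⟨u, w, hw, h6, hind⟩, ?_⟩
  set g : ℕ → V := fun i => w.getVert i with hg
  have hne : ∀ i j, 1 ≤ i → i ≤ 6 → 1 ≤ j → j ≤ 6 → i ≠ j → g i ≠ g j := by
    intro i j hi1 hi6 hj1 hj6 hij hgij
    exact hij (SignedGraph.cycle_getVert_inj hw.1 hi1 (by omega) hj1 (by omega) hgij)
  have hcol : ∀ i, i + 1 ≤ 6 → c (g i) ≠ c (g (i + 1)) := by
    intro i hi
    exact hc _ _ (w.adj_getVert_succ (by omega))
  have tricol : ∀ a b d : Bool, a ≠ b → b ≠ d → a = d := by decide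
  have flip : ∀ a b : Bool, a ≠ b → b = !a := by decide
  have c13 : c (g 1) = c (g 3) := tricol _ _ _ (hcol 1 (by omega)) (hcol 2 (by omega))
  have c35 : c (g 3) = c (g 5) := tricol _ _ _ (hcol 3 (by omega)) (hcol 4 (by omega))
  have c24 : c (g 2) = c (g 4) := tricol _ _ _ (hcol 2 (by omega)) (hcol 3 (by omega))
  have c46 : c (g 4) = c (g 6) := tricol _ _ _ (hcol 4 (by omega)) (hcol 5 (by omega))
  have c12 : c (g 2) = !(c (g 1)) := flip _ _ (hcol 1 (by omega))
  have hodd3 : 3 ≤ (Finset.univ.filter fun v => c v = c (g 1)).card :=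
    SignedGraph.three_le_card_filter _ (hne 1 3 (by omega) (by omega) (by omega) (by omega) (by omega))
      (hne 1 5 (by omega) (by omega) (by omega) (by omega) (by omega))
      (hne 3 5 (by omega) (by omega) (by omega) (by omega) (by omega))
      rfl c13.symm (c13.trans c35).symm
  have heven3 : 3 ≤ (Finset.univ.filter fun v => c v = !(c (g 1))).card :=
    SignedGraph.three_le_card_filter _ (hne 2 4 (by omega) (by omega) (by omega) (by omega) (by omega))
      (hne 2 6 (by omega) (by omega) (by omega) (by omega) (by omega))
      (hne 4 6 (by omega) (by omega) (by omega) (by omega) (by omega))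
      c12 (c24.symm.trans c12) ((c24.trans c46).symm.trans c12)
  cases hb : c (g 1)
  · rw [hb] at hodd3 heven3
    simp only [Bool.not_false] at heven3
    exact ⟨heven3, hodd3⟩
  · rw [hb] at hodd3 heven3
    simp only [Bool.not_true] at heven3
    exact ⟨hodd3, heven3⟩
end

section
/- Let Γ be a signed graph with largest eigenvalue λ₁ and associated eigenvector x. If u,v are non-adjacent vertices with x_u x_v ≥ 0 and (x_u, x_v) ≠ (0,0), then the signed graph Γ' obtained by adding the positive edge uv satisfies λ₁(Γ') > λ₁(Γ). -/
open Matrix Finset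

lemma psd_aux {n : Type*} [Fintype n] [DecidableEq n] {B : Matrix n n ℝ} (hB : B.IsHermitian)
    (μ : ℝ) (h : ∀ i, hB.eigenvalues i ≤ μ) : (μ • (1 : Matrix n n ℝ) - B).PosSemidef := by
  have hU : (hB.eigenvectorUnitary : Matrix n n ℝ) * star (hB.eigenvectorUnitary : Matrix n n ℝ) = 1 :=
    Matrix.mem_unitaryGroup_iff.mp hB.eigenvectorUnitary.2
  have key : μ • (1 : Matrix n n ℝ) - B =
      (hB.eigenvectorUnitary : Matrix n n ℝ) * diagonal (fun i => μ - hB.eigenvalues i) *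
        star (hB.eigenvectorUnitary : Matrix n n ℝ) := by
    have hd : diagonal (fun i => μ - hB.eigenvalues i) =
        μ • (1 : Matrix n n ℝ) - diagonal (RCLike.ofReal ∘ hB.eigenvalues) := by
      rw [smul_one_eq_diagonal, ← diagonal_sub]
      rfl
    rw [hd, Matrix.mul_sub, Matrix.sub_mul,
      ← Unitary.conjStarAlgAut_apply (S := ℝ) hB.eigenvectorUnitary (diagonal (RCLike.ofReal ∘ hB.eigenvalues)),
      ← hB.spectral_theorem,
      Matrix.mul_smul, Matrix.mul_one, Matrix.smul_mul, hU]
  rw [key]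
  exact (Matrix.posSemidef_diagonal_iff.mpr (fun i => by simpa using h i)).mul_mul_conjTranspose_same _

/-- Adding a positive edge between non-adjacent vertices `u, v` with `x_u x_v ≥ 0`
and `(x_u, x_v) ≠ (0,0)`, where `x` is an eigenvector for `λ₁(Γ)`, strictly increases
the largest eigenvalue. -/
theorem lambda_one_lt_of_add_positive_edge {V : Type*} [Fintype V] [DecidableEq V]
    [Nonempty V] (Γ Γ' : SignedGraph V) (u v : V) (hne : u ≠ v)
    (huv : ¬ Γ.G.Adj u v)
    (hadj : Γ'.adjMatrix = Γ.adjMatrix +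
      Matrix.of fun a b => if (a = u ∧ b = v) ∨ (a = v ∧ b = u) then (1 : ℝ) else 0)
    (hA : Γ.adjMatrix.IsHermitian) (hA' : Γ'.adjMatrix.IsHermitian)
    (x : V → ℝ) (hx : x ≠ 0)
    (heig : Γ.adjMatrix *ᵥ x =
      (Finset.univ.sup' Finset.univ_nonempty hA.eigenvalues) • x)
    (hprod : 0 ≤ x u * x v) (hnz : x u ≠ 0 ∨ x v ≠ 0) :
    Finset.univ.sup' Finset.univ_nonempty hA.eigenvalues <
      Finset.univ.sup' Finset.univ_nonempty hA'.eigenvalues := by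
  set lam := Finset.univ.sup' Finset.univ_nonempty hA.eigenvalues with hlam
  by_contra hlt
  push_neg at hlt
  have hle : ∀ i, hA'.eigenvalues i ≤ lam :=
    fun i => le_trans (Finset.le_sup' _ (Finset.mem_univ i)) hlt
  have hM := psd_aux hA' lam hle
  set e : V → ℝ := fun w => (if w = u then x v else 0) + (if w = v then x u else 0) with he
  have hE : Γ'.adjMatrix *ᵥ x = Γ.adjMatrix *ᵥ x + e := by
    rw [hadj, add_mulVec]
    congr 1
    funext a
    simp only [mulVec, dotProduct, of_apply, he]
    by_cases hau : a = u <;> by_cases hav : a = v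
    · exact absurd (hau.symm.trans hav) hne
    · simp [hau, hav, hne, hne.symm, ite_mul, Finset.sum_ite_eq']
    · simp [hau, hav, hne, hne.symm, ite_mul, Finset.sum_ite_eq']
    · simp [hau, hav]
  have hMx : (lam • (1 : Matrix V V ℝ) - Γ'.adjMatrix) *ᵥ x = -e := by
    rw [sub_mulVec, hE, heig, smul_mulVec, one_mulVec]
    abel
  have hdot : star x ⬝ᵥ ((lam • (1 : Matrix V V ℝ) - Γ'.adjMatrix) *ᵥ x) = -(2 * (x u * x v)) := by
    rw [hMx]
    simp only [star_trivial, dotProduct, he, Pi.neg_apply, mul_neg, mul_add, mul_ite, mul_zero,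
      Finset.sum_neg_distrib, Finset.sum_add_distrib, Finset.sum_ite_eq', Finset.mem_univ, if_true]
    ring
  have hge := (posSemidef_iff_dotProduct_mulVec.mp hM).2 x
  rw [hdot] at hge
  have hz : x u * x v = 0 := by nlinarith
  have h0 : (lam • (1 : Matrix V V ℝ) - Γ'.adjMatrix) *ᵥ x = 0 :=
    (hM.dotProduct_mulVec_zero_iff x).mp (by rw [hdot, hz]; ring)
  rw [hMx, neg_eq_zero] at h0
  have hu : x v = 0 := by
    have := congrFun h0 u
    simpa [he, hne, hne.symm] using this
  have hv : x u = 0 := by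
    have := congrFun h0 v
    simpa [he, hne, hne.symm] using this
  rcases hnz with h | h <;> [exact h hv; exact h hu]
end

section
/- Let Γ be a signed graph with largest eigenvalue λ₁ and associated eigenvector x. If uv is a negative edge of Γ with x_u x_v ≥ 0 and (x_u, x_v) ≠ (0,0), then deleting the edge uv strictly increases the largest eigenvalue, and reversing its sign to positive also strictly increases the largest eigenvalue. -/
open Matrix Finset

private lemma star_eq_trans {V : Type*} [Fintype V] (U : Matrix V V ℝ) : star U = Uᵀ := by
  ext i j
  simp [Matrix.star_eq_conjTranspose, Matrix.conjTranspose_apply]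

private lemma dot_trans {V : Type*} [Fintype V] (M : Matrix V V ℝ) (w z : V → ℝ) :
    w ⬝ᵥ (M *ᵥ z) = (Mᵀ *ᵥ w) ⬝ᵥ z := by
  rw [dotProduct_mulVec, mulVec_transpose]

private lemma rayleigh_le_aux {V : Type*} [Fintype V] [DecidableEq V] {B : Matrix V V ℝ}
    (hB : B.IsHermitian) {μ : ℝ} (hμ : ∀ i, hB.eigenvalues i ≤ μ) (y : V → ℝ) :
    y ⬝ᵥ (B *ᵥ y) ≤ μ * (y ⬝ᵥ y) := by
  classical
  set U : Matrix V V ℝ := (hB.eigenvectorUnitary : Matrix V V ℝ) with hU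
  have hUU : U * star U = 1 := Matrix.mem_unitaryGroup_iff.mp hB.eigenvectorUnitary.2
  set z : V → ℝ := star U *ᵥ y with hz
  have hzz : y ⬝ᵥ y = z ⬝ᵥ z := by
    calc y ⬝ᵥ y = y ⬝ᵥ ((U * star U) *ᵥ y) := by rw [hUU, one_mulVec]
    _ = y ⬝ᵥ (U *ᵥ z) := by rw [← mulVec_mulVec]
    _ = (Uᵀ *ᵥ y) ⬝ᵥ z := dot_trans _ _ _
    _ = z ⬝ᵥ z := by rw [← star_eq_trans]
  have hdiag : ∀ d : V → ℝ, diagonal d *ᵥ z = fun i => d i * z i := by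
    intro d; ext i; simp [mulVec_diagonal]
  have hBy : y ⬝ᵥ (B *ᵥ y) = z ⬝ᵥ (diagonal hB.eigenvalues *ᵥ z) := by
    conv_lhs => rw [hB.spectral_theorem]
    have hco : (RCLike.ofReal ∘ hB.eigenvalues : V → ℝ) = hB.eigenvalues := by
      ext i; simp
    rw [hco, Unitary.conjStarAlgAut_apply, mul_assoc, ← mulVec_mulVec, dot_trans, ← star_eq_trans, ← hz, ← mulVec_mulVec]
  rw [hBy, hzz, hdiag]
  have : z ⬝ᵥ (fun i => hB.eigenvalues i * z i) = ∑ i, hB.eigenvalues i * (z i * z i) := by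
    simp only [dotProduct]
    exact Finset.sum_congr rfl fun i _ => by ring
  rw [this]
  have hzz2 : μ * (z ⬝ᵥ z) = ∑ i, μ * (z i * z i) := by
    simp [dotProduct, Finset.mul_sum]
  rw [hzz2]
  exact Finset.sum_le_sum fun i _ =>
    mul_le_mul_of_nonneg_right (hμ i) (mul_self_nonneg _)

set_option maxHeartbeats 1000000 in
private lemma key_aux {V : Type*} [Fintype V] [DecidableEq V] (A : Matrix V V ℝ)
    (hAsymm : Aᵀ = A) (u v : V) (hne : u ≠ v) (hAvv : A v v = 0) (c lam : ℝ) (hc : 0 < c)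
    (x : V → ℝ) (heig : A *ᵥ x = lam • x) (hu : x u ≠ 0) (hprod : 0 ≤ x u * x v) :
    ∃ y : V → ℝ, y ≠ 0 ∧ lam * (y ⬝ᵥ y) <
      y ⬝ᵥ ((A + (single u v c + single v u c)) *ᵥ y) := by
  classical
  set s : ℝ := if 0 < x u then 1 else -1 with hs
  have hsx : s * x u = |x u| := by
    rcases lt_or_gt_of_ne hu with h | h
    · rw [hs, if_neg (by linarith), abs_of_neg h]; ring
    · rw [hs, if_pos h, abs_of_pos h]; ring
  have hss : s * s = 1 := by rw [hs]; split <;> norm_num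
  have habs : 0 < |x u| := abs_pos.mpr hu
  set ε : ℝ := c * |x u| / (|lam| + 1) with hε
  have hεpos : 0 < ε := div_pos (mul_pos hc habs) (by positivity)
  have hεeq : ε * (|lam| + 1) = c * |x u| := by
    rw [hε]; field_simp
  set t : ℝ := ε * s with ht
  set e : V → ℝ := Pi.single v 1 with he
  set y : V → ℝ := x + t • e with hy
  have hyu : y u = x u := by
    simp [hy, he, Pi.single_eq_of_ne hne]
  have hyv : y v = x v + t := by simp [hy, he]
  refine ⟨y, fun h0 => hu (by rw [← hyu, h0]; rfl), ?_⟩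
  have hxe : x ⬝ᵥ e = x v := by simp [he, dotProduct_single]
  have hex : e ⬝ᵥ x = x v := by simp [he, single_dotProduct]
  have hee : e ⬝ᵥ e = (1 : ℝ) := by simp [he, single_dotProduct]
  have hyy : y ⬝ᵥ y = x ⬝ᵥ x + 2 * t * x v + t * t := by
    simp only [hy, dotProduct_add, add_dotProduct, dotProduct_smul, smul_dotProduct,
      smul_eq_mul, hxe, hex, hee]
    ring
  have hsymdot : ∀ w z : V → ℝ, w ⬝ᵥ (A *ᵥ z) = (A *ᵥ w) ⬝ᵥ z := fun w z => by
    rw [dot_trans, hAsymm]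
  have hxAe : x ⬝ᵥ (A *ᵥ e) = lam * x v := by
    rw [hsymdot, heig, smul_dotProduct, hxe]; rfl
  have heAe : e ⬝ᵥ (A *ᵥ e) = 0 := by
    rw [he, single_dotProduct, one_mul, mulVec_single]
    simp [hAvv]
  have heAx : e ⬝ᵥ (A *ᵥ x) = lam * x v := by
    rw [heig, dotProduct_smul, hex]; rfl
  have hAy : A *ᵥ y = A *ᵥ x + t • (A *ᵥ e) := by
    rw [hy, mulVec_add, mulVec_smul]
  have hAyy : y ⬝ᵥ (A *ᵥ y) = lam * (x ⬝ᵥ x) + 2 * t * (lam * x v) := by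
    have hxAx : x ⬝ᵥ (A *ᵥ x) = lam * (x ⬝ᵥ x) := by
      rw [heig, dotProduct_smul]; rfl
    simp only [hAy, hy, mulVec_add, mulVec_smul, dotProduct_add, add_dotProduct, dotProduct_smul, smul_dotProduct,
      smul_eq_mul, hxAx, hxAe, heAe, heAx]
    ring
  have hupd : ∀ (a : V) (r : ℝ), y ⬝ᵥ Function.update (0 : V → ℝ) a r = y a * r := by
    intro a r
    simp [dotProduct, Function.update_apply, mul_ite]
  have hEyy : y ⬝ᵥ ((single u v c + single v u c) *ᵥ y)
      = 2 * c * (y u * y v) := by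
    rw [add_mulVec, dotProduct_add, single_mulVec, single_mulVec,
      hupd, hupd]
    ring
  rw [hyy, add_mulVec, dotProduct_add, hAyy, hEyy, hyu, hyv]
  have h1 : t * x u = ε * |x u| := by rw [ht]; rw [mul_assoc, hsx]
  have h2 : t * t = ε * ε := by rw [ht]; nlinarith [hss]
  have h3 : lam ≤ |lam| := le_abs_self lam
  have e2 : 0 < ε * ε := mul_pos hεpos hεpos
  have hmain : lam * (ε * ε) < 2 * c * (ε * |x u|) := by
    have h4 : 2 * c * (ε * |x u|) = 2 * (|lam| + 1) * (ε * ε) := by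
      rw [show 2 * c * (ε * |x u|) = 2 * ε * (c * |x u|) by ring, ← hεeq]; ring
    have h5 : lam * (ε * ε) ≤ |lam| * (ε * ε) := mul_le_mul_of_nonneg_right h3 e2.le
    rw [h4]
    nlinarith [e2, abs_nonneg lam]
  have h6 : lam * (t * t) = lam * (ε * ε) := by rw [h2]
  have h7 : 2 * c * (x u * t) = 2 * c * (ε * |x u|) := by rw [mul_comm (x u) t, h1]
  have h8 : 0 ≤ 2 * c * (x u * x v) := by
    apply mul_nonneg _ hprod; linarith
  linarith [h6, h7, h8, hmain]

private lemma main_aux {V : Type*} [Fintype V] [DecidableEq V] [Nonempty V]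
    (A B : Matrix V V ℝ) (hB : B.IsHermitian) (hAsymm : Aᵀ = A) (u v : V) (hne : u ≠ v)
    (hAuu : A u u = 0) (hAvv : A v v = 0) (c : ℝ) (hc : 0 < c)
    (hBform : B = A + Matrix.of fun a b =>
      if (a = u ∧ b = v) ∨ (a = v ∧ b = u) then c else 0)
    (lam : ℝ) (x : V → ℝ) (heig : A *ᵥ x = lam • x) (hprod : 0 ≤ x u * x v)
    (hnz : x u ≠ 0 ∨ x v ≠ 0) :
    lam < Finset.univ.sup' Finset.univ_nonempty hB.eigenvalues := by
  classical
  have hform : (Matrix.of fun a b =>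
      if (a = u ∧ b = v) ∨ (a = v ∧ b = u) then c else 0 : Matrix V V ℝ)
      = single u v c + single v u c := by
    ext a b
    simp only [Matrix.of_apply, Matrix.add_apply]
    by_cases h1 : a = u ∧ b = v
    · obtain ⟨rfl, rfl⟩ := h1
      simp [Matrix.single, hne, hne.symm]
    · by_cases h2 : a = v ∧ b = u
      · obtain ⟨rfl, rfl⟩ := h2
        simp [Matrix.single, hne, hne.symm]
      · simp only [Matrix.single, Matrix.of_apply, h1, h2, or_self, if_false,
          or_false, false_or]
        rw [if_neg (fun h => h1 ⟨h.1.symm, h.2.symm⟩),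
          if_neg (fun h => h2 ⟨h.1.symm, h.2.symm⟩), add_zero]
  have hB' : B = A + (single u v c + single v u c) := by
    rw [hBform, hform]
  obtain ⟨y, hy0, hylt⟩ :
      ∃ y : V → ℝ, y ≠ 0 ∧ lam * (y ⬝ᵥ y) < y ⬝ᵥ (B *ᵥ y) := by
    rcases hnz with hu | hv
    · obtain ⟨y, hy0, hlt⟩ := key_aux A hAsymm u v hne hAvv c lam hc x heig hu hprod
      exact ⟨y, hy0, by rwa [hB']⟩
    · obtain ⟨y, hy0, hlt⟩ := key_aux A hAsymm v u hne.symm hAuu c lam hc x heig hv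
        (by rwa [mul_comm])
      refine ⟨y, hy0, ?_⟩
      rwa [hB', add_comm (single u v c)]
  have hpos : 0 < y ⬝ᵥ y := by
    rcases (Finset.sum_nonneg fun i _ => mul_self_nonneg (y i)).lt_or_eq with h | h
    · exact h
    · exact absurd (dotProduct_self_eq_zero.mp h.symm) hy0
  have hle : y ⬝ᵥ (B *ᵥ y) ≤ (Finset.univ.sup' Finset.univ_nonempty hB.eigenvalues)
      * (y ⬝ᵥ y) :=
    rayleigh_le_aux hB (fun i => Finset.le_sup' hB.eigenvalues (Finset.mem_univ i)) y
  exact lt_of_mul_lt_mul_right (lt_of_lt_of_le hylt hle) hpos.le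

/-- Deleting a negative edge `uv` with `x_u x_v ≥ 0` and `(x_u, x_v) ≠ (0,0)`, where `x`
is an eigenvector for `λ₁(Γ)`, strictly increases the largest eigenvalue; so does
reversing its sign to positive. -/
theorem lambda_one_lt_of_delete_or_reverse_negative_edge {V : Type*} [Fintype V]
    [DecidableEq V] [Nonempty V] (Γ Γd Γr : SignedGraph V) (u v : V) (hne : u ≠ v)
    (huv : Γ.G.Adj u v) (hneg : Γ.sign u v = -1)
    (hdel : Γd.adjMatrix = Γ.adjMatrix +
      Matrix.of fun a b => if (a = u ∧ b = v) ∨ (a = v ∧ b = u) then (1 : ℝ) else 0)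
    (hrev : Γr.adjMatrix = Γ.adjMatrix +
      Matrix.of fun a b => if (a = u ∧ b = v) ∨ (a = v ∧ b = u) then (2 : ℝ) else 0)
    (hA : Γ.adjMatrix.IsHermitian) (hAd : Γd.adjMatrix.IsHermitian)
    (hAr : Γr.adjMatrix.IsHermitian)
    (x : V → ℝ) (hx : x ≠ 0)
    (heig : Γ.adjMatrix *ᵥ x =
      (Finset.univ.sup' Finset.univ_nonempty hA.eigenvalues) • x)
    (hprod : 0 ≤ x u * x v) (hnz : x u ≠ 0 ∨ x v ≠ 0) :
    Finset.univ.sup' Finset.univ_nonempty hA.eigenvalues <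
      Finset.univ.sup' Finset.univ_nonempty hAd.eigenvalues ∧
    Finset.univ.sup' Finset.univ_nonempty hA.eigenvalues <
      Finset.univ.sup' Finset.univ_nonempty hAr.eigenvalues := by
  have hsymm : Γ.adjMatrixᵀ = Γ.adjMatrix := by rw [← star_eq_trans]; exact hA
  have hAuu : Γ.adjMatrix u u = 0 := Γ.sign_nonedge u u (Γ.G.irrefl)
  have hAvv : Γ.adjMatrix v v = 0 := Γ.sign_nonedge v v (Γ.G.irrefl)
  exact ⟨main_aux Γ.adjMatrix Γd.adjMatrix hAd hsymm u v hne hAuu hAvv 1 one_pos hdel _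
      x heig hprod hnz,
    main_aux Γ.adjMatrix Γr.adjMatrix hAr hsymm u v hne hAuu hAvv 2 two_pos hrev _
      x heig hprod hnz⟩
end

section
/- The adjacency matrix of the signed graph Γ_{r,s} has rank at most 6; equivalently, 0 is an eigenvalue of Γ_{r,s} with multiplicity at least r+s−6. -/
open Matrix Finset

/-- Sign of the edge between the `x`-th vertex of the `r`-side and the `y`-th vertex of the
`s`-side of `Γ_{r,s}`: index `r-1` on the left is `u₁`, index `0` on the left is `u`,
index `s-1` on the right is `v₁`, index `0` on the right is `v`. -/
def gammaSign (r s : ℕ) (x : Fin r) (y : Fin s) : ℝ :=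
  if (x : ℕ) = r - 1 then (if (y : ℕ) = 0 then 1 else if (y : ℕ) = s - 1 then -1 else 0)
  else if (x : ℕ) = 0 then (if (y : ℕ) = 0 then 0 else 1)
  else if (y : ℕ) = s - 1 then 0 else 1

/-- The adjacency matrix of the signed graph `Γ_{r,s}`. -/
def gammaMatrix (r s : ℕ) : Matrix (Fin r ⊕ Fin s) (Fin r ⊕ Fin s) ℝ :=
  Matrix.of fun a b =>
    match a, b with
    | Sum.inl x, Sum.inr y => gammaSign r s x y
    | Sum.inr y, Sum.inl x => gammaSign r s x y
    | _, _ => 0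

noncomputable def gP (r s : ℕ) : Matrix (Fin r ⊕ Fin s) (Fin 6) ℝ :=
  Matrix.of fun a i =>
    match a with
    | Sum.inl x =>
      if (i : ℕ) = 0 then (if (x : ℕ) = r - 1 then 1 else 0)
      else if (i : ℕ) = 1 then (if (x : ℕ) = r - 1 then 0 else if (x : ℕ) = 0 then 1 else 0)
      else if (i : ℕ) = 2 then (if (x : ℕ) = r - 1 then 0 else if (x : ℕ) = 0 then 0 else 1)
      else 0
    | Sum.inr y =>
      if (i : ℕ) = 3 then (if (y : ℕ) = 0 then 1 else if (y : ℕ) = s - 1 then -1 else 0)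
      else if (i : ℕ) = 4 then (if (y : ℕ) = 0 then 0 else 1)
      else if (i : ℕ) = 5 then (if (y : ℕ) = s - 1 then 0 else 1)
      else 0

noncomputable def gQ (r s : ℕ) : Matrix (Fin 6) (Fin r ⊕ Fin s) ℝ :=
  Matrix.of fun i a =>
    match a with
    | Sum.inr y =>
      if (i : ℕ) = 0 then (if (y : ℕ) = 0 then 1 else if (y : ℕ) = s - 1 then -1 else 0)
      else if (i : ℕ) = 1 then (if (y : ℕ) = 0 then 0 else 1)
      else if (i : ℕ) = 2 then (if (y : ℕ) = s - 1 then 0 else 1)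
      else 0
    | Sum.inl x =>
      if (i : ℕ) = 3 then (if (x : ℕ) = r - 1 then 1 else 0)
      else if (i : ℕ) = 4 then (if (x : ℕ) = r - 1 then 0 else if (x : ℕ) = 0 then 1 else 0)
      else if (i : ℕ) = 5 then (if (x : ℕ) = r - 1 then 0 else if (x : ℕ) = 0 then 0 else 1)
      else 0

set_option maxHeartbeats 800000 in
lemma gfact (r s : ℕ) : gammaMatrix r s = gP r s * gQ r s := by
  ext a b
  rw [Matrix.mul_apply, Fin.sum_univ_six]
  have h0 : ((0:Fin 6):ℕ) = 0 := rfl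
  have h1 : ((1:Fin 6):ℕ) = 1 := rfl
  have h2 : ((2:Fin 6):ℕ) = 2 := rfl
  have h3 : ((3:Fin 6):ℕ) = 3 := rfl
  have h4 : ((4:Fin 6):ℕ) = 4 := rfl
  have h5 : ((5:Fin 6):ℕ) = 5 := rfl
  rcases a with x|y <;> rcases b with x'|y' <;>
    simp only [gammaMatrix, gP, gQ, gammaSign, Matrix.of_apply, h0, h1, h2, h3, h4, h5] <;>
    norm_num <;> split_ifs <;> ring
/-- The adjacency matrix of `Γ_{r,s}` has rank at most `6`; equivalently `0` is an
eigenvalue of multiplicity at least `r + s - 6`. -/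
theorem gammaMatrix_rank_le_six (r s : ℕ) (hr : 3 ≤ r) (hrs : r ≤ s) :
    (gammaMatrix r s).rank ≤ 6 ∧
    r + s - 6 ≤ Module.finrank ℝ (LinearMap.ker (gammaMatrix r s).mulVecLin) := by
  have hrank : (gammaMatrix r s).rank ≤ 6 := by
    rw [gfact]
    calc (gP r s * gQ r s).rank ≤ (gP r s).rank := Matrix.rank_mul_le_left _ _
      _ ≤ Fintype.card (Fin 6) := Matrix.rank_le_card_width _
      _ = 6 := by simp
  refine ⟨hrank, ?_⟩
  have key := LinearMap.finrank_range_add_finrank_ker (gammaMatrix r s).mulVecLin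
  rw [Module.finrank_fintype_fun_eq_card, Fintype.card_sum, Fintype.card_fin,
    Fintype.card_fin] at key
  have hrk : Module.finrank ℝ (LinearMap.range (gammaMatrix r s).mulVecLin) ≤ 6 := hrank
  omega
end

section
/- The nonzero eigenvalues of the signed graph Γ_{r,s} are exactly the four roots of x⁴ − ((r−1)(s−1)+2)x² + (2r−3)(2s−3) = 0; in particular, λ₁(Γ_{r,s}) = sqrt( ((r−1)(s−1)+2 + sqrt( ((r−1)(s−1)+2)² − 4(2r−3)(2s−3) )) / 2 ). -/
open Matrix Finset

lemma sum_three {n : ℕ} (hn : 3 ≤ n) (c0 cl cm : ℝ) (x : Fin n → ℝ) (v0 vl : Fin n)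
    (h0 : (v0 : ℕ) = 0) (hl : (vl : ℕ) = n - 1) :
    ∑ y : Fin n, (if (y : ℕ) = 0 then c0 else if (y : ℕ) = n - 1 then cl else cm) * x y
      = c0 * x v0 + cl * x vl + cm * ∑ y ∈ (univ.erase v0).erase vl, x y := by
  have hne : vl ≠ v0 := by
    intro h; rw [h] at hl; omega
  have hmem : vl ∈ univ.erase v0 := Finset.mem_erase.2 ⟨hne, mem_univ _⟩
  rw [← Finset.add_sum_erase _ _ (mem_univ v0), ← Finset.add_sum_erase _ _ hmem]
  have h1 : ∀ y ∈ (univ.erase v0).erase vl,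
      (if (y : ℕ) = 0 then c0 else if (y : ℕ) = n - 1 then cl else cm) * x y = cm * x y := by
    intro y hy
    have h2 := Finset.mem_erase.1 hy
    have h3 := Finset.mem_erase.1 h2.2
    have hy1 : (y : ℕ) ≠ n - 1 := fun h => h2.1 (Fin.ext (h.trans hl.symm))
    have hy2 : (y : ℕ) ≠ 0 := fun h => h3.1 (Fin.ext (h.trans h0.symm))
    rw [if_neg hy2, if_neg hy1]
  rw [Finset.sum_congr rfl h1, ← Finset.mul_sum, if_pos h0, if_neg (by omega), if_pos hl]
  ring

lemma card_mid {n : ℕ} (hn : 3 ≤ n) (v0 vl : Fin n) (h0 : (v0 : ℕ) = 0) (hl : (vl : ℕ) = n - 1) :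
    ((univ.erase v0).erase vl).card = n - 2 := by
  have hne : vl ≠ v0 := by intro h; rw [h] at hl; omega
  rw [Finset.card_erase_of_mem (Finset.mem_erase.2 ⟨hne, mem_univ _⟩),
    Finset.card_erase_of_mem (mem_univ _), Finset.card_univ, Fintype.card_fin]
  omega

lemma sum_const_mid {n : ℕ} (hn : 3 ≤ n) (v0 vl : Fin n) (h0 : (v0 : ℕ) = 0) (hl : (vl : ℕ) = n - 1)
    (c : ℝ) : ∑ _y ∈ (univ.erase v0).erase vl, c = ((n : ℝ) - 2) * c := by
  rw [Finset.sum_const, card_mid hn v0 vl h0 hl, nsmul_eq_mul]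
  congr 1
  push_cast [Nat.cast_sub (by omega : 2 ≤ n)]
  ring

lemma mulVec_inl {r s : ℕ} (x : Fin r ⊕ Fin s → ℝ) (i : Fin r) :
    (gammaMatrix r s *ᵥ x) (Sum.inl i) = ∑ y : Fin s, gammaSign r s i y * x (Sum.inr y) := by
  simp [gammaMatrix, mulVec, dotProduct, Fintype.sum_sum_type]

lemma mulVec_inr {r s : ℕ} (x : Fin r ⊕ Fin s → ℝ) (j : Fin s) :
    (gammaMatrix r s *ᵥ x) (Sum.inr j) = ∑ i : Fin r, gammaSign r s i j * x (Sum.inl i) := by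
  simp [gammaMatrix, mulVec, dotProduct, Fintype.sum_sum_type]

lemma row_inl {r s : ℕ} (hr : 3 ≤ r) (hs : 3 ≤ s) (v0 v1 : Fin s)
    (h0 : (v0 : ℕ) = 0) (h1 : (v1 : ℕ) = s - 1) (i : Fin r) (z : Fin s → ℝ) :
    ∑ y : Fin s, gammaSign r s i y * z y =
      if (i : ℕ) = r - 1 then z v0 - z v1
      else if (i : ℕ) = 0 then (∑ y ∈ (univ.erase v0).erase v1, z y) + z v1
      else z v0 + ∑ y ∈ (univ.erase v0).erase v1, z y := by
  by_cases hi1 : (i : ℕ) = r - 1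
  · rw [if_pos hi1]
    have hg : ∀ y : Fin s, gammaSign r s i y
        = (if (y : ℕ) = 0 then (1:ℝ) else if (y : ℕ) = s - 1 then -1 else 0) := by
      intro y; unfold gammaSign; rw [if_pos hi1]
    simp only [hg]
    rw [sum_three hs 1 (-1) 0 z v0 v1 h0 h1]; ring
  · rw [if_neg hi1]
    by_cases hi0 : (i : ℕ) = 0
    · rw [if_pos hi0]
      have hg : ∀ y : Fin s, gammaSign r s i y
          = (if (y : ℕ) = 0 then (0:ℝ) else if (y : ℕ) = s - 1 then 1 else 1) := by
        intro y; unfold gammaSign; rw [if_neg hi1, if_pos hi0]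
        by_cases hy : (y : ℕ) = 0
        · rw [if_pos hy, if_pos hy]
        · rw [if_neg hy, if_neg hy]
          split_ifs <;> rfl
      simp only [hg]
      rw [sum_three hs 0 1 1 z v0 v1 h0 h1]; ring
    · rw [if_neg hi0]
      have hg : ∀ y : Fin s, gammaSign r s i y
          = (if (y : ℕ) = 0 then (1:ℝ) else if (y : ℕ) = s - 1 then 0 else 1) := by
        intro y; unfold gammaSign; rw [if_neg hi1, if_neg hi0]
        by_cases hy : (y : ℕ) = 0
        · rw [if_pos hy, if_neg (show ¬((y:ℕ) = s - 1) by omega)]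
        · rw [if_neg hy]
      simp only [hg]
      rw [sum_three hs 1 0 1 z v0 v1 h0 h1]; ring

lemma row_inr {r s : ℕ} (hr : 3 ≤ r) (hs : 3 ≤ s) (u0 u1 : Fin r)
    (h0 : (u0 : ℕ) = 0) (h1 : (u1 : ℕ) = r - 1) (j : Fin s) (z : Fin r → ℝ) :
    ∑ i : Fin r, gammaSign r s i j * z i =
      if (j : ℕ) = s - 1 then z u0 - z u1
      else if (j : ℕ) = 0 then z u1 + ∑ i ∈ (univ.erase u0).erase u1, z i
      else z u0 + ∑ i ∈ (univ.erase u0).erase u1, z i := by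
  by_cases hj1 : (j : ℕ) = s - 1
  · rw [if_pos hj1]
    have hg : ∀ i : Fin r, gammaSign r s i j
        = (if (i : ℕ) = 0 then (1:ℝ) else if (i : ℕ) = r - 1 then -1 else 0) := by
      intro i; unfold gammaSign
      by_cases hi1 : (i : ℕ) = r - 1
      · rw [if_pos hi1, if_neg (show ¬((j:ℕ) = 0) by omega), if_pos hj1,
          if_neg (show ¬((i:ℕ) = 0) by omega), if_pos hi1]
      · rw [if_neg hi1]
        by_cases hi0 : (i : ℕ) = 0
        · rw [if_pos hi0, if_neg (show ¬((j:ℕ) = 0) by omega), if_pos hi0]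
        · rw [if_neg hi0, if_pos hj1, if_neg hi0, if_neg hi1]
    simp only [hg]
    rw [sum_three hr 1 (-1) 0 z u0 u1 h0 h1]; ring
  · rw [if_neg hj1]
    by_cases hj0 : (j : ℕ) = 0
    · rw [if_pos hj0]
      have hg : ∀ i : Fin r, gammaSign r s i j
          = (if (i : ℕ) = 0 then (0:ℝ) else if (i : ℕ) = r - 1 then 1 else 1) := by
        intro i; unfold gammaSign
        by_cases hi1 : (i : ℕ) = r - 1
        · rw [if_pos hi1, if_pos hj0, if_neg (show ¬((i:ℕ) = 0) by omega), if_pos hi1]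
        · rw [if_neg hi1]
          by_cases hi0 : (i : ℕ) = 0
          · rw [if_pos hi0, if_pos hj0, if_pos hi0]
          · rw [if_neg hi0, if_neg hj1, if_neg hi0, if_neg hi1]
      simp only [hg]
      rw [sum_three hr 0 1 1 z u0 u1 h0 h1]; ring
    · rw [if_neg hj0]
      have hg : ∀ i : Fin r, gammaSign r s i j
          = (if (i : ℕ) = 0 then (1:ℝ) else if (i : ℕ) = r - 1 then 0 else 1) := by
        intro i; unfold gammaSign
        by_cases hi1 : (i : ℕ) = r - 1
        · rw [if_pos hi1, if_neg hj0, if_neg hj1, if_neg (show ¬((i:ℕ) = 0) by omega), if_pos hi1]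
        · rw [if_neg hi1]
          by_cases hi0 : (i : ℕ) = 0
          · rw [if_pos hi0, if_neg hj0, if_pos hi0]
          · rw [if_neg hi0, if_neg hj1, if_neg hi0, if_neg hi1]
      simp only [hg]
      rw [sum_three hr 1 0 1 z u0 u1 h0 h1]; ring

lemma eig_mem_range {n : Type*} [Fintype n] [DecidableEq n] {M : Matrix n n ℝ}
    (hM : M.IsHermitian) {μ : ℝ} {x : n → ℝ} (hx : x ≠ 0) (h : M *ᵥ x = μ • x) :
    ∃ i, hM.eigenvalues i = μ := by
  by_contra hc
  push_neg at hc
  set U : Matrix n n ℝ := (hM.eigenvectorUnitary : Matrix n n ℝ) with hU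
  have hUU : U * star U = 1 := (Matrix.mem_unitaryGroup_iff).mp hM.eigenvectorUnitary.2
  have h1 : M - μ • 1 = U * (diagonal (RCLike.ofReal ∘ hM.eigenvalues) - μ • 1) * star U := by
    rw [Matrix.mul_sub, Matrix.sub_mul]
    conv_lhs => rw [show M = U * diagonal (RCLike.ofReal ∘ hM.eigenvalues) * star U from hM.spectral_theorem]
    congr 1
    rw [Matrix.mul_smul, Matrix.mul_one, Matrix.smul_mul, hUU]
  have h2 : diagonal (RCLike.ofReal ∘ hM.eigenvalues) - μ • (1 : Matrix n n ℝ)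
      = diagonal (fun i => hM.eigenvalues i - μ) := by
    rw [RCLike.ofReal_real_eq_id]
    rw [smul_one_eq_diagonal, diagonal_sub]
    rfl
  have hdet : (M - μ • 1).det ≠ 0 := by
    rw [h1, h2, det_mul, det_mul, det_diagonal]
    have hd : ∏ i, (hM.eigenvalues i - μ) ≠ 0 :=
      Finset.prod_ne_zero_iff.2 fun i _ => sub_ne_zero.2 (hc i)
    have : U.det * (star U).det = 1 := by rw [← det_mul, hUU, det_one]
    intro hcon
    apply hd
    have := mul_eq_zero.1 hcon
    rcases this with h' | h'
    · rcases mul_eq_zero.1 h' with h'' | h''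
      · exfalso
        have : U.det ≠ 0 := by
          intro hz; rw [hz, zero_mul] at this; exact one_ne_zero this.symm
        exact this h''
      · exact h''
    · exfalso
      have : (star U).det ≠ 0 := by
        intro hz; rw [hz, mul_zero] at this; exact one_ne_zero this.symm
      exact this h'
  apply hdet
  apply Matrix.exists_mulVec_eq_zero_iff.mp
  refine ⟨x, hx, ?_⟩
  rw [sub_mulVec, h, smul_mulVec, one_mulVec, sub_self]

lemma cva5 {α : Type*} (a : α) (u : Fin 5 → α) : Matrix.vecCons a u 5 = u 4 := rfl
lemma cva4 {α : Type*} (a : α) (u : Fin 4 → α) : Matrix.vecCons a u 4 = u 3 := rfl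
lemma cva3 {α : Type*} (a : α) (u : Fin 3 → α) : Matrix.vecCons a u 3 = u 2 := rfl
lemma cva2 {α : Type*} (a : α) (u : Fin 2 → α) : Matrix.vecCons a u 2 = u 1 := rfl
lemma cva1 {α : Type*} (a : α) (u : Fin 1 → α) : Matrix.vecCons a u 1 = u 0 := rfl

set_option maxHeartbeats 4000000 in
set_option maxRecDepth 20000 in
lemma detN (a b μ : ℝ) :
    det !![μ,0,0,0,-1,-1; 0,μ,0,-(a-2),-(a-2),0; 0,0,μ,-1,0,1; 0,-1,-1,μ,0,0;
      -(b-2),-(b-2),0,0,μ,0; -1,0,1,0,0,μ] =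
    μ^2*(μ^4 - ((a-1)*(b-1)+2)*μ^2 + (2*a-3)*(2*b-3)) := by
  simp only [det_succ_row_zero, Fin.sum_univ_succ, Finset.univ_unique, Finset.sum_singleton,
    det_unique, Fin.default_eq_zero, of_apply, cons_val', cons_val_zero, cons_val_fin_one,
    empty_val', submatrix_apply, submatrix_submatrix, Function.comp_apply, Fin.zero_succAbove,
    Fin.succ_succAbove_zero, Fin.succ_succAbove_succ, cons_val_succ, Fin.val_zero, Fin.val_succ,
    pow_zero, pow_succ, one_mul, neg_mul, mul_neg, neg_neg, zero_add, add_zero, pow_one,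
    mul_one, zero_mul, mul_zero, neg_zero, Finset.sum_const, smul_eq_mul]
  ring

set_option maxHeartbeats 1000000 in
set_option maxRecDepth 20000 in
lemma key (r s : ℕ) (hr : 3 ≤ r) (hs : 3 ≤ s) (μ : ℝ) (hμ : μ ≠ 0) :
    (∃ x : (Fin r ⊕ Fin s) → ℝ, x ≠ 0 ∧ gammaMatrix r s *ᵥ x = μ • x) ↔
      μ ^ 4 - (((r : ℝ) - 1) * ((s : ℝ) - 1) + 2) * μ ^ 2 +
        (2 * (r : ℝ) - 3) * (2 * (s : ℝ) - 3) = 0 := by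
  have hrR : (3:ℝ) ≤ (r:ℝ) := by exact_mod_cast hr
  have hsR : (3:ℝ) ≤ (s:ℝ) := by exact_mod_cast hs
  have hr2 : ((r:ℝ) - 2) ≠ 0 := by intro h; nlinarith
  have hs2 : ((s:ℝ) - 2) ≠ 0 := by intro h; nlinarith
  obtain ⟨u0, hu0⟩ : ∃ u : Fin r, (u : ℕ) = 0 := ⟨⟨0, by omega⟩, rfl⟩
  obtain ⟨u1, hu1⟩ : ∃ u : Fin r, (u : ℕ) = r - 1 := ⟨⟨r - 1, by omega⟩, rfl⟩
  obtain ⟨v0, hv0⟩ : ∃ v : Fin s, (v : ℕ) = 0 := ⟨⟨0, by omega⟩, rfl⟩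
  obtain ⟨v1, hv1⟩ : ∃ v : Fin s, (v : ℕ) = s - 1 := ⟨⟨s - 1, by omega⟩, rfl⟩
  set N : Matrix (Fin 6) (Fin 6) ℝ :=
    !![μ,0,0,0,-1,-1; 0,μ,0,-((r:ℝ)-2),-((r:ℝ)-2),0; 0,0,μ,-1,0,1; 0,-1,-1,μ,0,0;
      -((s:ℝ)-2),-((s:ℝ)-2),0,0,μ,0; -1,0,1,0,0,μ] with hNdef
  have hdetiff : (∃ y : Fin 6 → ℝ, y ≠ 0 ∧ N *ᵥ y = 0) ↔ N.det = 0 :=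
    Matrix.exists_mulVec_eq_zero_iff
  have hdval : N.det = μ^2 * (μ^4 - (((r:ℝ)-1)*((s:ℝ)-1)+2)*μ^2 + (2*(r:ℝ)-3)*(2*(s:ℝ)-3)) := by
    rw [hNdef]; exact detN (r:ℝ) (s:ℝ) μ
  have hμ2 : μ^2 ≠ 0 := pow_ne_zero _ hμ
  have hquartiff : N.det = 0 ↔
      μ ^ 4 - (((r : ℝ) - 1) * ((s : ℝ) - 1) + 2) * μ ^ 2 +
        (2 * (r : ℝ) - 3) * (2 * (s : ℝ) - 3) = 0 := by
    rw [hdval]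
    constructor
    · intro h
      rcases mul_eq_zero.1 h with h' | h'
      · exact absurd h' hμ2
      · linarith [h']
    · intro h
      rw [show μ ^ 4 - (((r : ℝ) - 1) * ((s : ℝ) - 1) + 2) * μ ^ 2 +
          (2 * (r : ℝ) - 3) * (2 * (s : ℝ) - 3) =
          μ^4 - (((r:ℝ)-1)*((s:ℝ)-1)+2)*μ^2 + (2*(r:ℝ)-3)*(2*(s:ℝ)-3) from by ring] at h
      rw [h, mul_zero]
  rw [← hquartiff, ← hdetiff]
  constructor
  · rintro ⟨x, hx, heig⟩
    have hxl : ∀ i : Fin r, μ * x (Sum.inl i) =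
        (if (i : ℕ) = r - 1 then x (Sum.inr v0) - x (Sum.inr v1)
         else if (i : ℕ) = 0 then (∑ y ∈ (univ.erase v0).erase v1, x (Sum.inr y)) + x (Sum.inr v1)
         else x (Sum.inr v0) + ∑ y ∈ (univ.erase v0).erase v1, x (Sum.inr y)) := by
      intro i
      have h := congrFun heig (Sum.inl i)
      rw [mulVec_inl, row_inl hr hs v0 v1 hv0 hv1 i (fun y => x (Sum.inr y))] at h
      simp only [Pi.smul_apply, smul_eq_mul] at h
      exact h.symm
    have hxr : ∀ j : Fin s, μ * x (Sum.inr j) =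
        (if (j : ℕ) = s - 1 then x (Sum.inl u0) - x (Sum.inl u1)
         else if (j : ℕ) = 0 then x (Sum.inl u1) + ∑ i ∈ (univ.erase u0).erase u1, x (Sum.inl i)
         else x (Sum.inl u0) + ∑ i ∈ (univ.erase u0).erase u1, x (Sum.inl i)) := by
      intro j
      have h := congrFun heig (Sum.inr j)
      rw [mulVec_inr, row_inr hr hs u0 u1 hu0 hu1 j (fun i => x (Sum.inl i))] at h
      simp only [Pi.smul_apply, smul_eq_mul] at h
      exact h.symm
    set A := x (Sum.inl u0) with hA
    set B := ∑ i ∈ (univ.erase u0).erase u1, x (Sum.inl i) with hB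
    set C := x (Sum.inl u1) with hC
    set D := x (Sum.inr v0) with hD
    set E := ∑ y ∈ (univ.erase v0).erase v1, x (Sum.inr y) with hE
    set F := x (Sum.inr v1) with hF
    have eA : μ * A = E + F := by
      have h := hxl u0
      rwa [if_neg (by omega), if_pos hu0] at h
    have eC : μ * C = D - F := by
      have h := hxl u1
      rwa [if_pos hu1] at h
    have eD : μ * D = C + B := by
      have h := hxr v0
      rwa [if_neg (by omega), if_pos hv0] at h
    have eF : μ * F = A - C := by
      have h := hxr v1
      rwa [if_pos hv1] at h
    have eB : μ * B = ((r:ℝ) - 2) * (D + E) := by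
      rw [hB, Finset.mul_sum]
      rw [Finset.sum_congr rfl (fun i hi => ?_), sum_const_mid hr u0 u1 hu0 hu1 (D + E)]
      have h2 := Finset.mem_erase.1 hi
      have h3 := Finset.mem_erase.1 h2.2
      have hi1 : (i : ℕ) ≠ r - 1 := fun h => h2.1 (Fin.ext (h.trans hu1.symm))
      have hi0 : (i : ℕ) ≠ 0 := fun h => h3.1 (Fin.ext (h.trans hu0.symm))
      have h := hxl i
      rwa [if_neg hi1, if_neg hi0] at h
    have eE : μ * E = ((s:ℝ) - 2) * (A + B) := by
      rw [hE, Finset.mul_sum]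
      rw [Finset.sum_congr rfl (fun j hj => ?_), sum_const_mid hs v0 v1 hv0 hv1 (A + B)]
      have h2 := Finset.mem_erase.1 hj
      have h3 := Finset.mem_erase.1 h2.2
      have hj1 : (j : ℕ) ≠ s - 1 := fun h => h2.1 (Fin.ext (h.trans hv1.symm))
      have hj0 : (j : ℕ) ≠ 0 := fun h => h3.1 (Fin.ext (h.trans hv0.symm))
      have h := hxr j
      rwa [if_neg hj1, if_neg hj0] at h
    refine ⟨![A,B,C,D,E,F], ?_, ?_⟩
    · intro hzero
      apply hx
      have hA0 : A = 0 := congrFun hzero 0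
      have hB0 : B = 0 := congrFun hzero 1
      have hC0 : C = 0 := congrFun hzero 2
      have hD0 : D = 0 := congrFun hzero 3
      have hE0 : E = 0 := congrFun hzero 4
      have hF0 : F = 0 := congrFun hzero 5
      funext a
      cases a with
      | inl i =>
        have h := hxl i
        rw [hD0, hE0, hF0] at h
        have h2 : μ * x (Sum.inl i) = 0 := by
          rw [h]; split_ifs <;> ring
        simp only [Pi.zero_apply]
        exact (mul_eq_zero.1 h2).resolve_left hμ
      | inr j =>
        have h := hxr j
        rw [hA0, hB0, hC0] at h
        have h2 : μ * x (Sum.inr j) = 0 := by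
          rw [h]; split_ifs <;> ring
        simp only [Pi.zero_apply]
        exact (mul_eq_zero.1 h2).resolve_left hμ
    · funext k
      fin_cases k <;>
        simp [hNdef, Matrix.mulVec, dotProduct, Fin.sum_univ_six, cva5, cva4, cva3, cva2, cva1]
      · linear_combination eA
      · linear_combination eB
      · linear_combination eC
      · linear_combination eD
      · linear_combination eE
      · linear_combination eF
  · intro hdet0
    obtain ⟨y, hy0, hNy⟩ := hdet0
    have g : ∀ k : Fin 6, (N *ᵥ y) k = 0 := fun k => congrFun hNy k
    have g0 := g 0
    have g1 := g 1
    have g2 := g 2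
    have g3 := g 3
    have g4 := g 4
    have g5 := g 5
    simp [hNdef, Matrix.mulVec, dotProduct, Fin.sum_univ_six, cva5, cva4, cva3, cva2, cva1] at g0 g1 g2 g3 g4 g5
    refine ⟨Sum.elim
      (fun i => if (i : ℕ) = r - 1 then y 2 else if (i : ℕ) = 0 then y 0 else y 1 / ((r:ℝ)-2))
      (fun j => if (j : ℕ) = s - 1 then y 5 else if (j : ℕ) = 0 then y 3 else y 4 / ((s:ℝ)-2)),
      ?_, ?_⟩
    · intro hzero
      apply hy0
      have hz : ∀ a, Sum.elim
          (fun i : Fin r => if (i : ℕ) = r - 1 then y 2 else if (i : ℕ) = 0 then y 0 else y 1 / ((r:ℝ)-2))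
          (fun j : Fin s => if (j : ℕ) = s - 1 then y 5 else if (j : ℕ) = 0 then y 3 else y 4 / ((s:ℝ)-2)) a = 0 :=
        fun a => congrFun hzero a
      have e0 : y 0 = 0 := by
        have h := hz (Sum.inl u0)
        rwa [Sum.elim_inl, if_neg (by omega), if_pos hu0] at h
      have e2 : y 2 = 0 := by
        have h := hz (Sum.inl u1)
        rwa [Sum.elim_inl, if_pos hu1] at h
      have e1 : y 1 = 0 := by
        have h := hz (Sum.inl ⟨1, by omega⟩)
        rw [Sum.elim_inl, if_neg (by simp; omega), if_neg (by simp)] at h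
        exact (div_eq_zero_iff.1 h).resolve_right hr2
      have e3 : y 3 = 0 := by
        have h := hz (Sum.inr v0)
        rwa [Sum.elim_inr, if_neg (by omega), if_pos hv0] at h
      have e5 : y 5 = 0 := by
        have h := hz (Sum.inr v1)
        rwa [Sum.elim_inr, if_pos hv1] at h
      have e4 : y 4 = 0 := by
        have h := hz (Sum.inr ⟨1, by omega⟩)
        rw [Sum.elim_inr, if_neg (by simp; omega), if_neg (by simp)] at h
        exact (div_eq_zero_iff.1 h).resolve_right hs2
      funext k
      fin_cases k
      · exact e0
      · exact e1
      · exact e2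
      · exact e3
      · exact e4
      · exact e5
    · have hmidr : ∀ i ∈ (univ.erase u0).erase u1,
          (if (i : ℕ) = r - 1 then y 2 else if (i : ℕ) = 0 then y 0 else y 1 / ((r:ℝ)-2))
            = y 1 / ((r:ℝ)-2) := by
        intro i hi
        have h2 := Finset.mem_erase.1 hi
        have h3 := Finset.mem_erase.1 h2.2
        have hi1 : (i : ℕ) ≠ r - 1 := fun h => h2.1 (Fin.ext (h.trans hu1.symm))
        have hi0 : (i : ℕ) ≠ 0 := fun h => h3.1 (Fin.ext (h.trans hu0.symm))
        rw [if_neg hi1, if_neg hi0]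
      have hmids : ∀ j ∈ (univ.erase v0).erase v1,
          (if (j : ℕ) = s - 1 then y 5 else if (j : ℕ) = 0 then y 3 else y 4 / ((s:ℝ)-2))
            = y 4 / ((s:ℝ)-2) := by
        intro j hj
        have h2 := Finset.mem_erase.1 hj
        have h3 := Finset.mem_erase.1 h2.2
        have hj1 : (j : ℕ) ≠ s - 1 := fun h => h2.1 (Fin.ext (h.trans hv1.symm))
        have hj0 : (j : ℕ) ≠ 0 := fun h => h3.1 (Fin.ext (h.trans hv0.symm))
        rw [if_neg hj1, if_neg hj0]
      have hBsum : ∑ i ∈ (univ.erase u0).erase u1,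
          (if (i : ℕ) = r - 1 then y 2 else if (i : ℕ) = 0 then y 0 else y 1 / ((r:ℝ)-2)) = y 1 := by
        rw [Finset.sum_congr rfl hmidr, sum_const_mid hr u0 u1 hu0 hu1]
        field_simp
      have hEsum : ∑ j ∈ (univ.erase v0).erase v1,
          (if (j : ℕ) = s - 1 then y 5 else if (j : ℕ) = 0 then y 3 else y 4 / ((s:ℝ)-2)) = y 4 := by
        rw [Finset.sum_congr rfl hmids, sum_const_mid hs v0 v1 hv0 hv1]
        field_simp
      funext a
      cases a with
      | inl i =>
        rw [mulVec_inl, row_inl hr hs v0 v1 hv0 hv1 i _]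
        simp only [Sum.elim_inr, Pi.smul_apply, Sum.elim_inl, smul_eq_mul]
        rw [if_neg (show ¬((v0:ℕ) = s - 1) by omega), if_pos hv0, if_pos hv1, hEsum]
        by_cases hi1 : (i : ℕ) = r - 1
        · rw [if_pos hi1, if_pos hi1]
          linarith [g2]
        · rw [if_neg hi1, if_neg hi1]
          by_cases hi0 : (i : ℕ) = 0
          · rw [if_pos hi0, if_pos hi0]
            linarith [g0]
          · rw [if_neg hi0, if_neg hi0]
            field_simp
            linarith [g1]
      | inr j =>
        rw [mulVec_inr, row_inr hr hs u0 u1 hu0 hu1 j _]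
        simp only [Sum.elim_inl, Pi.smul_apply, Sum.elim_inr, smul_eq_mul]
        rw [if_neg (show ¬((u0:ℕ) = r - 1) by omega), if_pos hu0, if_pos hu1, hBsum]
        by_cases hj1 : (j : ℕ) = s - 1
        · rw [if_pos hj1, if_pos hj1]
          linarith [g5]
        · rw [if_neg hj1, if_neg hj1]
          by_cases hj0 : (j : ℕ) = 0
          · rw [if_pos hj0, if_pos hj0]
            linarith [g3]
          · rw [if_neg hj0, if_neg hj0]
            field_simp
            linarith [g4]

/-- The nonzero eigenvalues of `Γ_{r,s}` are exactly the four roots of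
`x⁴ - ((r-1)(s-1)+2)x² + (2r-3)(2s-3) = 0`; in particular `λ₁(Γ_{r,s})` equals the stated
closed-form expression. -/
theorem gammaMatrix_eigenvalues (r s : ℕ) (hr : 3 ≤ r) (hrs : r ≤ s)
    (hM : (gammaMatrix r s).IsHermitian) :
    (∀ μ : ℝ, μ ≠ 0 →
      ((∃ x : (Fin r ⊕ Fin s) → ℝ, x ≠ 0 ∧ gammaMatrix r s *ᵥ x = μ • x) ↔
        μ ^ 4 - (((r : ℝ) - 1) * ((s : ℝ) - 1) + 2) * μ ^ 2 +
          (2 * (r : ℝ) - 3) * (2 * (s : ℝ) - 3) = 0)) ∧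
    Finset.univ.sup' ⟨Sum.inl ⟨0, by omega⟩, Finset.mem_univ _⟩ hM.eigenvalues =
      Real.sqrt (((((r : ℝ) - 1) * ((s : ℝ) - 1) + 2) + Real.sqrt ((((r : ℝ) - 1) * ((s : ℝ) - 1) + 2) ^ 2 - 4 * (2 * (r : ℝ) - 3) * (2 * (s : ℝ) - 3))) / 2) := by
  have hs3 : 3 ≤ s := hr.trans hrs
  have hrR : (3:ℝ) ≤ (r:ℝ) := by exact_mod_cast hr
  have hsR : (3:ℝ) ≤ (s:ℝ) := by exact_mod_cast hs3
  have key' := fun (μ : ℝ) (hμ : μ ≠ 0) => key r s hr hs3 μ hμ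
  refine ⟨fun μ hμ => key' μ hμ, ?_⟩
  set P : ℝ := ((r:ℝ) - 1) * ((s:ℝ) - 1) + 2 with hP
  set Dd : ℝ := P ^ 2 - 4 * (2 * (r:ℝ) - 3) * (2 * (s:ℝ) - 3) with hDd
  have hp : 0 ≤ (r:ℝ) - 3 := by linarith
  have hq : 0 ≤ (s:ℝ) - 3 := by linarith
  have hD0 : 0 ≤ Dd := by
    rw [hDd, hP]
    nlinarith [mul_nonneg hp hq, mul_nonneg (mul_nonneg hp hp) (mul_nonneg hq hq),
      mul_nonneg (mul_nonneg hp hq) hq, mul_nonneg (mul_nonneg hp hp) hq,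
      sq_nonneg ((r:ℝ) - 3), sq_nonneg ((s:ℝ) - 3)]
  set e : ℝ := Real.sqrt Dd with he_def
  have he0 : 0 ≤ e := Real.sqrt_nonneg _
  have he : e ^ 2 = Dd := Real.sq_sqrt hD0
  set lam : ℝ := Real.sqrt ((P + e) / 2) with hlam
  have hPpos : 0 < P := by rw [hP]; nlinarith
  have hargpos : 0 < (P + e) / 2 := by
    apply div_pos (by linarith) two_pos
  have hlam2 : lam ^ 2 = (P + e) / 2 := Real.sq_sqrt hargpos.le
  have hlampos : 0 < lam := Real.sqrt_pos.2 hargpos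
  have hlamquart : lam ^ 4 - P * lam ^ 2 + (2 * (r:ℝ) - 3) * (2 * (s:ℝ) - 3) = 0 := by
    have h4 : lam ^ 4 = ((P + e) / 2) ^ 2 := by
      rw [show lam ^ 4 = (lam ^ 2) ^ 2 from by ring, hlam2]
    rw [h4, hlam2]
    have he' : e ^ 2 = P ^ 2 - 4 * (2 * (r:ℝ) - 3) * (2 * (s:ℝ) - 3) := by rw [he, hDd]
    linear_combination he' / 4
  obtain ⟨x, hx, heig⟩ := (key' lam (ne_of_gt hlampos)).mpr hlamquart
  obtain ⟨i0, hi0⟩ := eig_mem_range hM hx heig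
  have hbasisne : ∀ i : Fin r ⊕ Fin s,
      (⇑(hM.eigenvectorBasis i) : (Fin r ⊕ Fin s) → ℝ) ≠ 0 := by
    intro i hcon
    exact hM.eigenvectorBasis.orthonormal.ne_zero i ((WithLp.ofLp_eq_zero 2).1 (funext fun j => congrFun hcon j))
  apply le_antisymm
  · apply Finset.sup'_le
    intro i _
    by_cases hz : hM.eigenvalues i = 0
    · rw [hz]; exact hlampos.le
    · have hquart := (key' _ hz).mp
        ⟨_, hbasisne i, hM.mulVec_eigenvectorBasis i⟩
      set μ := hM.eigenvalues i with hμdef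
      have h2 : (2 * μ ^ 2 - P) ^ 2 = Dd := by
        rw [hDd]; linear_combination 4 * hquart
      have h3 : 2 * μ ^ 2 - P ≤ e := by
        calc 2 * μ ^ 2 - P ≤ |2 * μ ^ 2 - P| := le_abs_self _
          _ = e := by rw [he_def, ← h2, Real.sqrt_sq_eq_abs]
      have h4 : μ ^ 2 ≤ lam ^ 2 := by rw [hlam2]; linarith
      nlinarith [hlampos, h4]
  · calc lam = hM.eigenvalues i0 := hi0.symm
      _ ≤ _ := Finset.le_sup' _ (mem_univ i0)
end

section
/- For integers 3 ≤ r ≤ s with s ≥ 4, let f(r,s) = sqrt( ((r−1)(s−1)+2 + sqrt( ((r−1)(s−1)+2)² − 4(2r−3)(2s−3) )) / 2 ). Then f(r,s) > sqrt((r−1)(s−2)). -/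
/-- For integers `3 ≤ r ≤ s` with `s ≥ 4`, `f(r,s) > sqrt((r-1)(s-2))`. -/
theorem f_gt_sqrt (r s : ℕ) (hr : 3 ≤ r) (hrs : r ≤ s) (hs : 4 ≤ s) :
    Real.sqrt (((r : ℝ) - 1) * ((s : ℝ) - 2)) <
      Real.sqrt (((((r : ℝ) - 1) * ((s : ℝ) - 1) + 2) + Real.sqrt ((((r : ℝ) - 1) * ((s : ℝ) - 1) + 2) ^ 2 - 4 * (2 * (r : ℝ) - 3) * (2 * (s : ℝ) - 3))) / 2) := by
  have hr' : (3:ℝ) ≤ (r:ℝ) := by exact_mod_cast hr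
  have hs' : (4:ℝ) ≤ (s:ℝ) := by exact_mod_cast hs
  have hrs' : (r:ℝ) ≤ (s:ℝ) := by exact_mod_cast hrs
  set x : ℝ := (r:ℝ)
  set y : ℝ := (s:ℝ)
  set A : ℝ := (x - 1) * (y - 1) + 2 with hA
  set D : ℝ := A ^ 2 - 4 * (2 * x - 3) * (2 * y - 3) with hD
  have key : 2 * ((x - 1) * (y - 2)) - A < Real.sqrt D := by
    rcases lt_or_ge (2 * ((x - 1) * (y - 2)) - A) 0 with h | h
    · exact lt_of_lt_of_le h (Real.sqrt_nonneg D)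
    · rw [show Real.sqrt D = Real.sqrt D from rfl]
      have hlt : (2 * ((x - 1) * (y - 2)) - A) ^ 2 < D := by
        have hgap : (x^2 - 1) * (y - 2) > (2*x - 3) * (2*y - 3) := by
          nlinarith [mul_nonneg (sub_nonneg.2 hrs') (sub_nonneg.2 hr'),
            mul_nonneg (sub_nonneg.2 hr') (sub_nonneg.2 hs'),
            sq_nonneg (x - 3), sq_nonneg (y - 4)]
        nlinarith [hgap]
      exact (Real.lt_sqrt h).2 hlt
  apply Real.sqrt_lt_sqrt
  · nlinarith
  · linarith
end

section
/- Fix an integer n and for integers t with 3 ≤ t ≤ n−t, let g(t) = (t−1)(n−t−1)+2 + sqrt( ((t−1)(n−t−1)+2)² − 4(2t−3)(2(n−t)−3) ). Then g is strictly increasing in t on this range; consequently among pairs (r, n−r) with 3 ≤ r ≤ n−r, the quantity f(r, n−r) = sqrt(g(r)/2) is maximized uniquely at r = ⌊n/2⌋. -/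
/-- The function `g` from the paper, with `s = n - t`. -/
noncomputable def g12 (n t : ℕ) : ℝ :=
  ((t : ℝ) - 1) * ((n : ℝ) - (t : ℝ) - 1) + 2 +
    Real.sqrt ((((t : ℝ) - 1) * ((n : ℝ) - (t : ℝ) - 1) + 2) ^ 2 -
      4 * (2 * (t : ℝ) - 3) * (2 * ((n : ℝ) - (t : ℝ)) - 3))

lemma aux_D (a b : ℝ) (ha : 2 ≤ a) (hab : a ≤ b) :
    0 ≤ (a * b + 2) ^ 2 - 4 * (2 * a - 1) * (2 * b - 1) := by
  nlinarith [sq_nonneg ((a - 2) * b), sq_nonneg (b - 2),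
    mul_nonneg (mul_nonneg (by linarith : (0:ℝ) ≤ a - 2) (by linarith : (0:ℝ) ≤ b - 1))
      (by linarith : (0:ℝ) ≤ b - 2)]

lemma g_step_real (T N : ℝ) (hT : 3 ≤ T) (hN : 2 * T + 2 ≤ N) :
    (T - 1) * (N - T - 1) + 2 +
      Real.sqrt (((T - 1) * (N - T - 1) + 2) ^ 2 - 4 * (2 * T - 3) * (2 * (N - T) - 3)) <
    (T + 1 - 1) * (N - (T + 1) - 1) + 2 +
      Real.sqrt (((T + 1 - 1) * (N - (T + 1) - 1) + 2) ^ 2 -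
        4 * (2 * (T + 1) - 3) * (2 * (N - (T + 1)) - 3)) := by
  set P₁ := (T - 1) * (N - T - 1) + 2 with hP₁def
  set P₂ := (T + 1 - 1) * (N - (T + 1) - 1) + 2 with hP₂def
  have hD₁ : 0 ≤ P₁ ^ 2 - 4 * (2 * T - 3) * (2 * (N - T) - 3) := by
    have h := aux_D (T - 1) (N - T - 1) (by linarith) (by linarith)
    nlinarith [h]
  set s := Real.sqrt (P₁ ^ 2 - 4 * (2 * T - 3) * (2 * (N - T) - 3)) with hsdef
  have hs0 : 0 ≤ s := Real.sqrt_nonneg _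
  have hs2 : s ^ 2 = P₁ ^ 2 - 4 * (2 * T - 3) * (2 * (N - T) - 3) := Real.sq_sqrt hD₁
  have ha : (2:ℝ) ≤ T - 1 := by linarith
  have hb : (4:ℝ) ≤ N - T - 1 := by linarith
  have h8 : (8:ℝ) ≤ (T - 1) * (N - T - 1) :=
    le_trans (by norm_num) (mul_le_mul ha hb (by norm_num) (by linarith))
  have hP1 : 10 ≤ P₁ := by rw [hP₁def]; linarith
  have key : (P₁ + s - P₂) ^ 2 < P₂ ^ 2 - 4 * (2 * (T + 1) - 3) * (2 * (N - (T + 1)) - 3) := by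
    have hpos : (0:ℝ) < (N - 2 * T - 1) * (2 * P₁ + 2 * s - 16) :=
      mul_pos (by linarith) (by linarith)
    nlinarith [hs2, hpos]
  have h4 := Real.sqrt_lt_sqrt (sq_nonneg (P₁ + s - P₂)) key
  rw [Real.sqrt_sq_eq_abs] at h4
  have h5 : P₁ + s - P₂ <
      Real.sqrt (P₂ ^ 2 - 4 * (2 * (T + 1) - 3) * (2 * (N - (T + 1)) - 3)) :=
    lt_of_le_of_lt (le_abs_self _) h4
  linarith

lemma g_step (n t : ℕ) (h3 : 3 ≤ t) (h2 : 2 * t + 2 ≤ n) : g12 n t < g12 n (t + 1) := by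
  have hT : (3 : ℝ) ≤ (t : ℝ) := by exact_mod_cast h3
  have hN : 2 * (t : ℝ) + 2 ≤ (n : ℝ) := by exact_mod_cast h2
  simp only [g12]
  push_cast
  exact g_step_real (t : ℝ) (n : ℝ) hT hN

lemma g_nonneg (n t : ℕ) (h3 : 3 ≤ t) (h2 : 2 * t ≤ n) : 0 ≤ g12 n t := by
  have hT : (3 : ℝ) ≤ (t : ℝ) := by exact_mod_cast h3
  have hN : 2 * (t : ℝ) ≤ (n : ℝ) := by exact_mod_cast h2
  unfold g12
  have hs := Real.sqrt_nonneg ((((t : ℝ) - 1) * ((n : ℝ) - (t : ℝ) - 1) + 2) ^ 2 -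
      4 * (2 * (t : ℝ) - 3) * (2 * ((n : ℝ) - (t : ℝ)) - 3))
  nlinarith [mul_nonneg (by linarith : (0:ℝ) ≤ (t : ℝ) - 1)
    (by linarith : (0:ℝ) ≤ (n : ℝ) - (t : ℝ) - 1)]

/-- `g` is strictly increasing on `3 ≤ t ≤ n - t`; consequently `f(r, n-r) = sqrt(g(r)/2)`
is maximized uniquely at `r = ⌊n/2⌋` among `3 ≤ r ≤ n - r`. -/
theorem g_strictMono_and_max (n : ℕ) (hn : 7 ≤ n) :
    (∀ t₁ t₂ : ℕ, 3 ≤ t₁ → t₁ < t₂ → t₂ ≤ n - t₂ → g12 n t₁ < g12 n t₂) ∧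
    (∀ r : ℕ, 3 ≤ r → r ≤ n - r → r ≠ n / 2 →
      Real.sqrt (g12 n r / 2) < Real.sqrt (g12 n (n / 2) / 2)) := by
  have mono : ∀ t₁ t₂ : ℕ, 3 ≤ t₁ → t₁ < t₂ → t₂ ≤ n - t₂ → g12 n t₁ < g12 n t₂ := by
    intro t₁ t₂ h3 hlt hle
    induction t₂ with
    | zero => omega
    | succ k ih =>
      have h2k : 2 * k + 2 ≤ n := by omega
      rcases Nat.lt_or_ge t₁ k with h | h
      · have hk : k ≤ n - k := by omega
        exact lt_trans (ih h hk) (g_step n k (by omega) h2k)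
      · have : t₁ = k := by omega
        subst this
        exact g_step n t₁ h3 h2k
  refine ⟨mono, ?_⟩
  intro r h3 hle hne
  have h2r : 2 * r ≤ n := by omega
  have hr : r < n / 2 := by omega
  have hg := mono r (n / 2) h3 hr (by omega)
  have h0 : 0 ≤ g12 n r / 2 := by
    have := g_nonneg n r h3 h2r
    linarith
  exact Real.sqrt_lt_sqrt h0 (by linarith)
end

section
/- Any unbalanced signed bipartite graph on 3+3 vertices (partite sets both of size 3) containing no negative 4-cycle has spectral radius at most sqrt(3), with equality iff it contains a negative 6-cycle as a spanning structure; in particular, the negative 6-cycle C₆^− has spectral radius sqrt(3). -/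
open Matrix Finset

/- ### Auxiliary lemmas -/

private lemma cube_lemma (S : ZMod 6 → ℝ) (sq : ∀ k, S k * S k = 1)
    (hp : (∏ k : ZMod 6, S k) = -1) (M : Matrix (ZMod 6) (ZMod 6) ℝ)
    (hM : ∀ i j, M i j = (if j = i + 1 then S i else 0) + (if j = i - 1 then S (i - 1) else 0)) :
    M * (M * M) = (3 : ℝ) • M := by
  have h6 : (6 : ZMod 6) = 0 := by decide
  have row : ∀ (g : ZMod 6 → ℝ) (i : ZMod 6),
      ∑ x, M i x * g x = S i * g (i + 1) + S (i - 1) * g (i - 1) := by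
    intro g i
    have : ∀ x, M i x * g x = (if x = i + 1 then S i * g x else 0)
        + (if x = i - 1 then S (i - 1) * g x else 0) := by
      intro x
      rw [hM, add_mul]
      congr 1 <;> split <;> simp
    simp only [this, Finset.sum_add_distrib, Finset.sum_ite_eq' Finset.univ, mem_univ, if_true]
  ext i j
  rw [Matrix.mul_apply, Matrix.smul_apply, smul_eq_mul]
  have e1 : ∀ a, (M * M) a j = S a * M (a + 1) j + S (a - 1) * M (a - 1) j := by
    intro a; rw [Matrix.mul_apply]; exact row _ a
  rw [row (fun x => (M * M) x j) i, e1, e1]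
  have n1 : i + 1 + 1 = i + 2 := by ring
  have n2 : i + 1 - 1 = i := by ring
  have n3 : i - 1 + 1 = i := by ring
  have n4 : i - 1 - 1 = i - 2 := by ring
  rw [n1, n2, n3, n4]
  rw [hM (i+2) j, hM (i-2) j, hM i j]
  have c1 : i + 2 + 1 = i + 3 := by ring
  have c2 : i + 2 - 1 = i + 1 := by ring
  have c3 : i - 2 + 1 = i - 1 := by ring
  have c4 : i - 2 - 1 = i + 3 := by linear_combination -h6
  rw [c1, c2, c3, c4]
  have d1 : i + 1 ≠ i - 1 := fun h => absurd (by linear_combination h : (2 : ZMod 6) = 0) (by decide)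
  have d2 : i + 1 ≠ i + 3 := fun h => absurd (by linear_combination h : (-2 : ZMod 6) = 0) (by decide)
  have d3 : i - 1 ≠ i + 3 := fun h => absurd (by linear_combination -h : (4 : ZMod 6) = 0) (by decide)
  have prodsix : S i * S (i+1) * S (i+2) * S (i+3) * S (i+4) * S (i+5) = -1 := by
    have h2 : (∏ k : ZMod 6, S (i + k)) = -1 :=
      (Fintype.prod_equiv (Equiv.addLeft i) (fun k => S (i + k)) S (fun k => rfl)).trans hp
    have h3 := (Fin.prod_univ_six (fun k : ZMod 6 => S (i + k))).symm.trans h2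
    have h4 : S (i + 0) = S i := congrArg S (add_zero i)
    linear_combination h3 - (S (i+1) * S (i+2) * S (i+3) * S (i+4) * S (i+5)) * h4
  by_cases hj1 : j = i + 1
  · subst hj1
    simp only [if_pos rfl, if_true, show ¬(i+1 = i+3) from d2, show ¬(i+1 = i-1) from d1, if_false]
    linear_combination S i * sq (i+1) + S i * sq i + S i * sq (i-1)
  by_cases hj2 : j = i - 1
  · subst hj2
    simp only [if_pos rfl, if_true, show ¬(i-1 = i+1) from d1.symm, show ¬(i-1 = i+3) from d3, if_false]
    linear_combination S (i-1) * sq (i-2) + S (i-1) * sq i + S (i-1) * sq (i-1)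
  by_cases hj3 : j = i + 3
  · subst hj3
    simp only [if_pos rfl, if_true, show ¬(i+3 = i+1) from d2.symm, show ¬(i+3 = i-1) from d3.symm, if_false]
    have m1 : i - 1 = i + 5 := by linear_combination -h6
    have m2 : i - 2 = i + 4 := by linear_combination -h6
    rw [m1, m2]
    set a := S i * (S (i+1) * S (i+2)) with ha
    have hab : a * (S (i+3) * S (i+4) * S (i+5)) = -1 := by rw [ha]; linear_combination prodsix
    have ha2 : a * a = 1 := by
      rw [ha]
      linear_combination (S (i+1))^2 * (S (i+2))^2 * sq i + (S (i+2))^2 * sq (i+1) + sq (i+2)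
    have hb : S (i+5) * (S (i+4) * S (i+3)) = -a := by
      calc S (i+5) * (S (i+4) * S (i+3)) = (a*a) * (S (i+5) * (S (i+4) * S (i+3))) := by
            rw [ha2, one_mul]
        _ = a * (a * (S (i+3) * S (i+4) * S (i+5))) := by ring
        _ = a * (-1) := by rw [hab]
        _ = -a := by ring
    linear_combination hb
  · simp only [hj1, hj2, hj3, if_false]
    ring

private lemma getVert_eq_support_get {V : Type*} {G : SimpleGraph V} :
    ∀ {a b : V} (p : G.Walk a b) (n : ℕ) (h : n < p.support.length),
      p.getVert n = p.support.get ⟨n, h⟩ := by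
  intro a b p
  induction p with
  | nil =>
      intro n h
      simp only [SimpleGraph.Walk.support_nil, List.length_cons, List.length_nil] at h
      have hn : n = 0 := by omega
      subst hn
      rfl
  | cons hadj q ih =>
      intro n h
      cases n with
      | zero => simp [SimpleGraph.Walk.getVert_zero]
      | succ m =>
          rw [SimpleGraph.Walk.getVert_cons_succ]
          simp only [SimpleGraph.Walk.support_cons, List.get_cons_succ]
          exact ih m _

private lemma walk_sign_prod {V : Type*} (Γ : SignedGraph V) :
    ∀ {a b : V} (p : Γ.G.Walk a b),
      (p.edges.map Γ.edgeSign).prod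
        = ∏ k ∈ Finset.range p.length, Γ.sign (p.getVert k) (p.getVert (k+1)) := by
  intro a b p
  induction p with
  | nil => simp
  | cons hadj q ih =>
      rename_i x y z
      rw [SimpleGraph.Walk.edges_cons, List.map_cons, List.prod_cons, ih,
        SimpleGraph.Walk.length_cons, Finset.prod_range_succ']
      simp only [SimpleGraph.Walk.getVert_cons_succ, SimpleGraph.Walk.getVert_zero]
      rw [mul_comm]
      rfl

/-- An unbalanced signed bipartite graph with both partite sets of size `3` and no
negative 4-cycle has spectral radius at most `√3`, with equality iff it contains a
spanning negative 6-cycle. -/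
theorem three_by_three_spectral_radius {V : Type*} [Fintype V] [DecidableEq V]
    [Nonempty V] (Γ : SignedGraph V)
    (c : V → Bool) (hc : ∀ u v, Γ.G.Adj u v → c u ≠ c v)
    (h3t : (Finset.univ.filter fun v => c v = true).card = 3)
    (h3f : (Finset.univ.filter fun v => c v = false).card = 3)
    (hU : Γ.Unbalanced)
    (hC4 : ∀ (u : V) (w : Γ.G.Walk u u), Γ.IsNegCycle w → w.length ≠ 4)
    (hA : Γ.adjMatrix.IsHermitian) :
    Finset.univ.sup' Finset.univ_nonempty (fun i => |hA.eigenvalues i|) ≤ Real.sqrt 3 ∧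
    (Finset.univ.sup' Finset.univ_nonempty (fun i => |hA.eigenvalues i|) = Real.sqrt 3 ↔
      ∃ (u : V) (w : Γ.G.Walk u u), Γ.IsNegCycle w ∧ w.length = 6 ∧
        ∀ v, v ∈ w.support) := by
  classical
  obtain ⟨u, w, hwc, hwprod⟩ := hU
  have hcard : Fintype.card V = 6 := by
    have h := Finset.card_filter_add_card_filter_not (s := (univ : Finset V))
      (p := fun v => c v = true)
    have he : (univ.filter fun v => ¬ (c v = true)) = (univ.filter fun v => c v = false) := by
      apply Finset.filter_congr; intro x _; simp [Bool.not_eq_true]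
    rw [he, h3t, h3f] at h
    rw [← Finset.card_univ]; omega
  have hcol : ∀ {a b : V} (p : Γ.G.Walk a b), Even p.length ↔ c a = c b := by
    intro a b p
    induction p with
    | nil => simp
    | cons hadj q ih =>
        rename_i x y z
        rw [SimpleGraph.Walk.length_cons, Nat.even_add_one, ih]
        have hne := hc _ _ hadj
        cases hx : c x <;> cases hy : c y <;> cases hz : c z <;> simp_all
  have hlen6 : w.length = 6 := by
    have heven : Even w.length := (hcol w).mpr rfl
    have h3 : 3 ≤ w.length := hwc.three_le_length
    have hle : w.length ≤ 6 := by
      have hnd := hwc.support_nodup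
      have h2 := hnd.length_le_card
      rw [List.length_tail, SimpleGraph.Walk.length_support, hcard] at h2
      omega
    have h4 : w.length ≠ 4 := hC4 u w ⟨hwc, hwprod⟩
    obtain ⟨k, hk⟩ := heven
    omega
  have hinj : ∀ a b : ℕ, 1 ≤ a → a ≤ 6 → 1 ≤ b → b ≤ 6 →
      w.getVert a = w.getVert b → a = b := by
    intro a b ha1 ha6 hb1 hb6 hab
    have hsl : w.support.length = 7 := by rw [SimpleGraph.Walk.length_support, hlen6]
    have hta : a < w.support.length := by omega
    have htb : b < w.support.length := by omega
    rw [getVert_eq_support_get w a hta, getVert_eq_support_get w b htb] at hab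
    obtain ⟨a', rfl⟩ : ∃ a', a = a' + 1 := ⟨a - 1, by omega⟩
    obtain ⟨b', rfl⟩ : ∃ b', b = b' + 1 := ⟨b - 1, by omega⟩
    have hlt : w.support.tail.length = 6 := by rw [List.length_tail, hsl]
    have hta' : a' < w.support.tail.length := by omega
    have htb' : b' < w.support.tail.length := by omega
    rw [← List.get_tail _ a' hta', ← List.get_tail _ b' htb'] at hab
    have h2 := (hwc.support_nodup.get_inj_iff).mp hab
    have : a' = b' := by simpa using h2
    omega
  -- the cyclic labelling of the six vertices
  set f : ZMod 6 → V := fun i => w.getVert (i.val + 1) with hf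
  have hfinj : Function.Injective f := by
    intro i j hij
    have hi := ZMod.val_lt i
    have hj := ZMod.val_lt j
    have h2 := hinj (i.val+1) (j.val+1) (by omega) (by omega) (by omega) (by omega) hij
    exact ZMod.val_injective 6 (by omega)
  have hbij : Function.Bijective f :=
    (Fintype.bijective_iff_injective_and_card f).mpr ⟨hfinj, by simp [hcard, ZMod.card]⟩
  set e : ZMod 6 ≃ V := Equiv.ofBijective f hbij with hedef
  have hee : ∀ i : ZMod 6, e i = w.getVert (i.val + 1) := fun i => rfl
  have hval1 : (1 : ZMod 6).val = 1 := rfl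
  have hlen6' : 6 ≤ w.length := by omega
  have hg6 : w.getVert 6 = u := by rw [← hlen6]; exact w.getVert_length
  have hadj6 : ∀ i : ZMod 6, Γ.G.Adj (e i) (e (i + 1)) := by
    intro i
    rw [hee, hee]
    have hv : (i + 1).val = (i.val + 1) % 6 := by rw [ZMod.val_add, hval1]
    have hi := ZMod.val_lt i
    rcases Nat.lt_or_ge i.val 5 with h5 | h5
    · have hv' : (i+1).val = i.val + 1 := by rw [hv]; omega
      rw [hv']
      exact w.adj_getVert_succ (by omega)
    · have h5' : i.val = 5 := by omega
      have hv0 : (i+1).val = 0 := by rw [hv, h5']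
      rw [h5', hv0, show (5:ℕ)+1 = 6 from rfl, hg6]
      have h2 := w.adj_getVert_succ (i := 0) (by omega)
      rwa [w.getVert_zero] at h2
  set S : ZMod 6 → ℝ := fun i => Γ.sign (e i) (e (i + 1)) with hSdef
  have hpm : ∀ k, S k = 1 ∨ S k = -1 := fun k => Γ.sign_edge _ _ (hadj6 k)
  have sq : ∀ k, S k * S k = 1 := by intro k; rcases hpm k with h | h <;> rw [h] <;> norm_num
  have hprod6 : (∏ k : ZMod 6, S k) = -1 := by
    have hr := walk_sign_prod Γ w
    rw [hr, hlen6] at hwprod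
    have hexp : ∏ k : ZMod 6, S k = S 0 * S 1 * S 2 * S 3 * S 4 * S 5 := Fin.prod_univ_six S
    have hS0 : S 0 = Γ.sign (w.getVert 1) (w.getVert 2) := rfl
    have hS1 : S 1 = Γ.sign (w.getVert 2) (w.getVert 3) := rfl
    have hS2 : S 2 = Γ.sign (w.getVert 3) (w.getVert 4) := rfl
    have hS3 : S 3 = Γ.sign (w.getVert 4) (w.getVert 5) := rfl
    have hS4 : S 4 = Γ.sign (w.getVert 5) (w.getVert 6) := rfl
    have hS5 : S 5 = Γ.sign (w.getVert 6) (w.getVert 1) := rfl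
    have hrng : ∏ k ∈ Finset.range 6, Γ.sign (w.getVert k) (w.getVert (k+1))
        = Γ.sign (w.getVert 0) (w.getVert 1) * Γ.sign (w.getVert 1) (w.getVert 2)
          * Γ.sign (w.getVert 2) (w.getVert 3) * Γ.sign (w.getVert 3) (w.getVert 4)
          * Γ.sign (w.getVert 4) (w.getVert 5) * Γ.sign (w.getVert 5) (w.getVert 6) := by
      simp [Finset.prod_range_succ]
    rw [hrng] at hwprod
    rw [w.getVert_zero] at hwprod
    rw [hg6] at hwprod
    rw [hexp, hS0, hS1, hS2, hS3, hS4, hS5, hg6]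
    linear_combination hwprod

  have h6z : (6 : ZMod 6) = 0 := by decide
  -- exclusion of chords at distance 3
  have hchord : ∀ i : ZMod 6, ¬ Γ.G.Adj (e i) (e (i + 3)) := by
    intro i hadj
    have h01 := hadj6 i
    have h12 := hadj6 (i+1); rw [show i+1+1 = i+2 from by ring] at h12
    have h23 := hadj6 (i+2); rw [show i+2+1 = i+3 from by ring] at h23
    have h34 := hadj6 (i+3); rw [show i+3+1 = i+4 from by ring] at h34
    have h45 := hadj6 (i+4); rw [show i+4+1 = i+5 from by ring] at h45
    have h50 := hadj6 (i+5); rw [show i+5+1 = i from by linear_combination h6z] at h50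
    have n01 : e i ≠ e (i+1) := fun h =>
      absurd (show (1:ZMod 6) = 0 from by linear_combination -(e.injective h)) (by decide)
    have n02 : e i ≠ e (i+2) := fun h =>
      absurd (show (2:ZMod 6) = 0 from by linear_combination -(e.injective h)) (by decide)
    have n03 : e i ≠ e (i+3) := fun h =>
      absurd (show (3:ZMod 6) = 0 from by linear_combination -(e.injective h)) (by decide)
    have n04 : e i ≠ e (i+4) := fun h =>
      absurd (show (4:ZMod 6) = 0 from by linear_combination -(e.injective h)) (by decide)
    have n05 : e i ≠ e (i+5) := fun h =>
      absurd (show (5:ZMod 6) = 0 from by linear_combination -(e.injective h)) (by decide)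
    have n12 : e (i+1) ≠ e (i+2) := fun h =>
      absurd (show (1:ZMod 6) = 0 from by linear_combination -(e.injective h)) (by decide)
    have n13 : e (i+1) ≠ e (i+3) := fun h =>
      absurd (show (2:ZMod 6) = 0 from by linear_combination -(e.injective h)) (by decide)
    have n23 : e (i+2) ≠ e (i+3) := fun h =>
      absurd (show (1:ZMod 6) = 0 from by linear_combination -(e.injective h)) (by decide)
    have n34 : e (i+3) ≠ e (i+4) := fun h =>
      absurd (show (1:ZMod 6) = 0 from by linear_combination -(e.injective h)) (by decide)
    have n35 : e (i+3) ≠ e (i+5) := fun h =>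
      absurd (show (2:ZMod 6) = 0 from by linear_combination -(e.injective h)) (by decide)
    have n45 : e (i+4) ≠ e (i+5) := fun h =>
      absurd (show (1:ZMod 6) = 0 from by linear_combination -(e.injective h)) (by decide)
    set t : ℝ := Γ.sign (e i) (e (i+3)) with htdef
    have ht : t = 1 ∨ t = -1 := Γ.sign_edge _ _ hadj
    have htt : t * t = 1 := by rcases ht with h | h <;> rw [h] <;> norm_num
    have hsymm : Γ.sign (e (i+3)) (e i) = t := Γ.sign_symm _ _
    have hS1e : S (i+1) = Γ.sign (e (i+1)) (e (i+2)) := by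
      show Γ.sign (e (i+1)) (e (i+1+1)) = _
      rw [show i+1+1 = i+2 from by ring]
    have hS2e : S (i+2) = Γ.sign (e (i+2)) (e (i+3)) := by
      show Γ.sign (e (i+2)) (e (i+2+1)) = _
      rw [show i+2+1 = i+3 from by ring]
    have hS3e : S (i+3) = Γ.sign (e (i+3)) (e (i+4)) := by
      show Γ.sign (e (i+3)) (e (i+3+1)) = _
      rw [show i+3+1 = i+4 from by ring]
    have hS4e : S (i+4) = Γ.sign (e (i+4)) (e (i+5)) := by
      show Γ.sign (e (i+4)) (e (i+4+1)) = _
      rw [show i+4+1 = i+5 from by ring]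
    have hS5e : S (i+5) = Γ.sign (e (i+5)) (e i) := by
      show Γ.sign (e (i+5)) (e (i+5+1)) = _
      rw [show i+5+1 = i from by linear_combination h6z]
    have hS0e : S i = Γ.sign (e i) (e (i+1)) := rfl
    have prodsix : S i * S (i+1) * S (i+2) * S (i+3) * S (i+4) * S (i+5) = -1 := by
      have h2 : (∏ k : ZMod 6, S (i + k)) = -1 :=
        (Fintype.prod_equiv (Equiv.addLeft i) (fun k => S (i + k)) S (fun k => rfl)).trans hprod6
      have h3 := (Fin.prod_univ_six (fun k : ZMod 6 => S (i + k))).symm.trans h2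
      have h4 : S (i + 0) = S i := congrArg S (add_zero i)
      linear_combination h3 - (S (i+1) * S (i+2) * S (i+3) * S (i+4) * S (i+5)) * h4
    -- the two 4-cycles
    let c1 : Γ.G.Walk (e i) (e i) :=
      SimpleGraph.Walk.cons h01 (SimpleGraph.Walk.cons h12 (SimpleGraph.Walk.cons h23
        (SimpleGraph.Walk.cons hadj.symm SimpleGraph.Walk.nil)))
    let c2 : Γ.G.Walk (e (i+3)) (e (i+3)) :=
      SimpleGraph.Walk.cons h34 (SimpleGraph.Walk.cons h45 (SimpleGraph.Walk.cons h50
        (SimpleGraph.Walk.cons hadj SimpleGraph.Walk.nil)))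
    have hc1cyc : c1.IsCycle := by
      rw [SimpleGraph.Walk.cons_isCycle_iff]
      refine ⟨?_, ?_⟩
      · simp [SimpleGraph.Walk.cons_isPath_iff, n12, n13, n23,
          n01.symm, n02.symm, n03.symm, n12.symm, n13.symm, n23.symm]
      · simp [n01, n02, n03, n12, n13, n23, n01.symm, n02.symm, n03.symm,
          Sym2.eq_iff]
    have hc2cyc : c2.IsCycle := by
      rw [SimpleGraph.Walk.cons_isCycle_iff]
      refine ⟨?_, ?_⟩
      · simp [SimpleGraph.Walk.cons_isPath_iff, n45, n35.symm, n34.symm,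
          n03, n04, n05, n45.symm]
        decide
      · simp [n34, n35, n45, n03, n04, n05, n34.symm, n35.symm, n45.symm,
          n03.symm, n04.symm, n05.symm, Sym2.eq_iff]
    have hp1 : (c1.edges.map Γ.edgeSign).prod = S i * S (i+1) * S (i+2) * t := by
      simp only [c1, SimpleGraph.Walk.edges_cons, SimpleGraph.Walk.edges_nil,
        List.map_cons, List.map_nil, List.prod_cons, List.prod_nil]
      have he1 : Γ.edgeSign s(e i, e (i+1)) = Γ.sign (e i) (e (i+1)) := rfl
      have he2 : Γ.edgeSign s(e (i+1), e (i+2)) = Γ.sign (e (i+1)) (e (i+2)) := rfl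
      have he3 : Γ.edgeSign s(e (i+2), e (i+3)) = Γ.sign (e (i+2)) (e (i+3)) := rfl
      have he4 : Γ.edgeSign s(e (i+3), e i) = Γ.sign (e (i+3)) (e i) := rfl
      rw [he1, he2, he3, he4, hsymm, ← hS0e, ← hS1e, ← hS2e]
      ring
    have hp2 : (c2.edges.map Γ.edgeSign).prod = S (i+3) * S (i+4) * S (i+5) * t := by
      simp only [c2, SimpleGraph.Walk.edges_cons, SimpleGraph.Walk.edges_nil,
        List.map_cons, List.map_nil, List.prod_cons, List.prod_nil]
      have he1 : Γ.edgeSign s(e (i+3), e (i+4)) = Γ.sign (e (i+3)) (e (i+4)) := rfl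
      have he2 : Γ.edgeSign s(e (i+4), e (i+5)) = Γ.sign (e (i+4)) (e (i+5)) := rfl
      have he3 : Γ.edgeSign s(e (i+5), e i) = Γ.sign (e (i+5)) (e i) := rfl
      have he4 : Γ.edgeSign s(e i, e (i+3)) = Γ.sign (e i) (e (i+3)) := rfl
      rw [he1, he2, he3, he4, ← htdef, ← hS3e, ← hS4e, ← hS5e]
      ring
    have hc1len : c1.length = 4 := by simp [c1]
    have hc2len : c2.length = 4 := by simp [c2]
    have hP1 : S i * S (i+1) * S (i+2) * t = 1 ∨ S i * S (i+1) * S (i+2) * t = -1 := by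
      rcases hpm i with h0 | h0 <;> rcases hpm (i+1) with h1 | h1 <;>
        rcases hpm (i+2) with h2 | h2 <;> rcases ht with h3 | h3 <;>
        rw [h0, h1, h2, h3] <;> norm_num
    have hPP : (S i * S (i+1) * S (i+2) * t) * (S (i+3) * S (i+4) * S (i+5) * t) = -1 := by
      linear_combination prodsix + (S i * S (i+1) * S (i+2) * (S (i+3) * (S (i+4) * S (i+5)))) * htt
    rcases hP1 with h1 | h1
    · have h2 : S (i+3) * S (i+4) * S (i+5) * t = -1 := by
        rw [h1, one_mul] at hPP; exact hPP
      exact absurd hc2len (hC4 _ c2 ⟨hc2cyc, by rw [hp2, h2]⟩)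
    · exact absurd hc1len (hC4 _ c1 ⟨hc1cyc, by rw [hp1, h1]⟩)
  
  -- colours along the cycle
  have hcoln : ∀ n : ℕ, n ≤ 6 → c (w.getVert n) = (if n % 2 = 0 then c u else !(c u)) := by
    intro n
    induction n with
    | zero => intro _; simp [w.getVert_zero]
    | succ m ih =>
        intro hm
        have hprev := ih (by omega)
        have hadjm := w.adj_getVert_succ (i := m) (by omega)
        have hnem := hc _ _ hadjm
        have hstep : c (w.getVert (m+1)) = !(c (w.getVert m)) := by
          revert hnem
          cases c (w.getVert (m+1)) <;> cases c (w.getVert m) <;> simp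
        rw [hstep, hprev]
        rcases Nat.even_or_odd m with ⟨k, hk⟩ | ⟨k, hk⟩
        · have hm1 : m % 2 = 0 := by omega
          have hm2 : (m+1) % 2 = 1 := by omega
          simp [hm1, hm2]
        · have hm1 : m % 2 = 1 := by omega
          have hm2 : (m+1) % 2 = 0 := by omega
          simp [hm1, hm2]
  -- full description of the sign function
  have hsign_e : ∀ i j : ZMod 6, Γ.sign (e i) (e j)
      = (if j = i + 1 then S i else 0) + (if j = i - 1 then S (i - 1) else 0) := by
    intro i j
    by_cases hadj : Γ.G.Adj (e i) (e j)
    · have hpar : ¬ ((i.val + 1) % 2 = (j.val + 1) % 2) := by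
        intro hp2
        have hci := hcoln (i.val + 1) (by have := ZMod.val_lt i; omega)
        have hcj := hcoln (j.val + 1) (by have := ZMod.val_lt j; omega)
        have hnec := hc _ _ hadj
        rw [hee i, hee j] at hnec
        rw [hci, hcj, hp2] at hnec
        exact hnec rfl
      have hne3 : j ≠ i + 3 := fun h => hchord i (h ▸ hadj)
      have hcase : j = i + 1 ∨ j = i - 1 := by
        have key : ∀ i j : ZMod 6, ¬((i.val + 1) % 2 = (j.val + 1) % 2) → j ≠ i + 3
            → (j = i + 1 ∨ j = i - 1) := by decide
        exact key i j hpar hne3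
      have d1 : i + 1 ≠ i - 1 := fun h =>
        absurd (show (2:ZMod 6) = 0 from by linear_combination h) (by decide)
      rcases hcase with h | h
      · subst h
        rw [if_pos rfl, if_neg d1]
        show S i = S i + 0
        ring
      · subst h
        rw [if_neg d1.symm, if_pos rfl]
        have hsm : S (i-1) = Γ.sign (e (i-1)) (e i) := by
          show Γ.sign (e (i-1)) (e (i-1+1)) = _
          rw [show i-1+1 = i from by ring]
        rw [Γ.sign_symm, ← hsm]
        ring
    · rw [Γ.sign_nonedge _ _ hadj]
      have hif1 : j ≠ i + 1 := fun h => hadj (by rw [h]; exact hadj6 i)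
      have hif2 : j ≠ i - 1 := by
        intro h
        have h2 := hadj6 (i-1)
        rw [show i-1+1 = i from by ring] at h2
        exact hadj (by rw [h]; exact h2.symm)
      rw [if_neg hif1, if_neg hif2, add_zero]
  -- matrix identity A³ = 3A
  set A := Γ.adjMatrix with hAdef
  set M : Matrix (ZMod 6) (ZMod 6) ℝ := Matrix.of (fun i j =>
    (if j = i + 1 then S i else 0) + (if j = i - 1 then S (i - 1) else 0)) with hMdef
  have hsub : A.submatrix e e = M := by
    ext i j
    exact hsign_e i j
  have hM3 : M * (M * M) = (3:ℝ) • M := cube_lemma S sq hprod6 M (fun i j => rfl)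
  have hA3 : A * (A * A) = (3:ℝ) • A := by
    have hmul : ∀ (X Y : Matrix V V ℝ), (X * Y).submatrix e e
        = X.submatrix e e * Y.submatrix e e :=
      fun X Y => (Matrix.submatrix_mul_equiv X Y e e e).symm
    have hsubp : ∀ i j, A (e i) (e j) = M i j := fun i j => hsign_e i j
    have h2 : (A * (A * A)).submatrix e e = ((3:ℝ) • A).submatrix e e := by
      rw [hmul, hmul, hsub, hM3]
      ext i j
      simp [Matrix.submatrix_apply, Matrix.smul_apply, hsubp]
    ext a b
    have h3 := congrFun (congrFun h2 (e.symm a)) (e.symm b)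
    simpa [Matrix.submatrix_apply] using h3
  -- eigenvalue analysis
  have heig : ∀ i, hA.eigenvalues i = 0 ∨ (hA.eigenvalues i)^2 = 3 := by
    intro i
    have hx := hA.mulVec_eigenvectorBasis i
    have hxne : (⇑(hA.eigenvectorBasis i) : V → ℝ) ≠ 0 := by
      simpa using hA.eigenvectorBasis.orthonormal.ne_zero i
    have h3x : (A * (A * A)) *ᵥ ⇑(hA.eigenvectorBasis i)
        = ((hA.eigenvalues i)^3) • ⇑(hA.eigenvectorBasis i) := by
      rw [← Matrix.mulVec_mulVec, ← Matrix.mulVec_mulVec, hx, Matrix.mulVec_smul, hx,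
        Matrix.mulVec_smul, Matrix.mulVec_smul, hx]
      rw [smul_smul, smul_smul]
      ring_nf
    have h3x' : ((3:ℝ) • A) *ᵥ ⇑(hA.eigenvectorBasis i)
        = (3 * hA.eigenvalues i) • ⇑(hA.eigenvectorBasis i) := by
      rw [Matrix.smul_mulVec, hx, smul_smul]
    rw [hA3, h3x'] at h3x
    have hz : ((hA.eigenvalues i)^3 - 3 * hA.eigenvalues i) • ⇑(hA.eigenvectorBasis i) = 0 := by
      rw [sub_smul, h3x, sub_self]
    rcases smul_eq_zero.mp hz with hz0 | hz0
    · have hfac : hA.eigenvalues i * ((hA.eigenvalues i)^2 - 3) = 0 := by linear_combination hz0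
      rcases mul_eq_zero.mp hfac with h0 | h0
      · exact Or.inl h0
      · exact Or.inr (by linear_combination h0)
    · exact absurd hz0 hxne
  have hex : ∃ i, hA.eigenvalues i ≠ 0 := by
    by_contra hall
    push_neg at hall
    have hzero : A = 0 := by
      have hst := hA.spectral_theorem
      have hdiag : Matrix.diagonal (RCLike.ofReal ∘ hA.eigenvalues) = (0 : Matrix V V ℝ) := by
        ext a b
        by_cases hab : a = b
        · subst hab; simp [hall]
        · simp [Matrix.diagonal_apply_ne _ hab]
      rw [hdiag] at hst
      simpa using hst
    have hA01 : A (e 0) (e (0+1)) = S 0 := rfl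
    rw [hzero] at hA01
    rcases hpm 0 with h | h <;> rw [h] at hA01 <;> simp at hA01
  have hle : ∀ i : V, |hA.eigenvalues i| ≤ Real.sqrt 3 := by
    intro i
    rcases heig i with h | h
    · rw [h]; simp [Real.sqrt_nonneg]
    · rw [show |hA.eigenvalues i| = Real.sqrt 3 from by rw [← h, Real.sqrt_sq_eq_abs]]
  have hsup_le : univ.sup' univ_nonempty (fun i => |hA.eigenvalues i|) ≤ Real.sqrt 3 :=
    Finset.sup'_le _ _ fun i _ => hle i
  obtain ⟨i0, hi0⟩ := hex
  have hi0sq : (hA.eigenvalues i0)^2 = 3 := (heig i0).resolve_left hi0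
  have habs : |hA.eigenvalues i0| = Real.sqrt 3 := by rw [← hi0sq, Real.sqrt_sq_eq_abs]
  have hsup_ge : Real.sqrt 3 ≤ univ.sup' univ_nonempty (fun i : V => |hA.eigenvalues i|) := by
    rw [← habs]
    exact Finset.le_sup' (fun i : V => |hA.eigenvalues i|) (mem_univ i0)
  have hsup : univ.sup' univ_nonempty (fun i : V => |hA.eigenvalues i|) = Real.sqrt 3 :=
    le_antisymm hsup_le hsup_ge
  have hspan : ∀ v : V, v ∈ w.support := by
    intro v
    rw [SimpleGraph.Walk.mem_support_iff_exists_getVert]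
    refine ⟨(e.symm v).val + 1, ?_, ?_⟩
    · have h2 := hee (e.symm v)
      rw [e.apply_symm_apply] at h2
      exact h2.symm
    · have := ZMod.val_lt (e.symm v); omega
  exact ⟨hsup.le, ⟨fun _ => ⟨u, w, ⟨hwc, hwprod⟩, hlen6, hspan⟩, fun _ => hsup⟩⟩
end
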